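/- arXiv:1310.4643 — 4 statements merged into one kernel-verified Lean document; each statement's English description precedes it below -/
import Mathlib

section
/- Let (X,d) be a metric space equipped with a Borel measure μ, let m ≥ 1 be an integer, and fix x ∈ X. Let H : (0,∞) × X × X → [0,∞) be a measurable kernel that is symmetric in the space variables, satisfies the semigroup identity H(t+s,x,y) = ∫_X H(t,x,z)·H(s,z,y) dμ(z) for all t,s > 0, is stochastically complete (∫_X H(t,z,y) dμ(y) = 1 for all t > 0 and z ∈ X), and satisfies the Markvorsen bound of dimension m: H(t,z,y) ≤ (4πt)^{-m/2}·exp(-d(z,y)²/(4t)) for all t > 0 and z,y ∈ X. Assume that the function s ↦ μ(B_s(x))/(ω_m s^m) is nondecreasing on (0,∞) and converges, as s → ∞, to a limit E with 0 < E < 1/C_m. Then (1 - E·C_m)²/E ≤ limsup_{t→∞} (4πt)^{m/2}·H(t,x,x) ≤ 1. -/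
open MeasureTheory Real Filter Set

/-- Upper incomplete Gamma function `Γ(a,x) = ∫ₓ^∞ u^(a-1) e^(-u) du`. -/
noncomputable def incGamma (a x : ℝ) : ℝ := ∫ u in Set.Ioi x, u ^ (a - 1) * Real.exp (-u)

/-- Volume `ω_m` of the unit ball in `ℝ^m`. -/
noncomputable def omegaBall (m : ℕ) : ℝ := Real.pi ^ ((m : ℝ) / 2) / Real.Gamma ((m : ℝ) / 2 + 1)

/-- The constant `C_m = Γ(m/2, 2 ((m/2) Γ(m/2))^(2/m)) / Γ(m/2)`. -/
noncomputable def Cm (m : ℕ) : ℝ :=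
  incGamma ((m : ℝ) / 2) (2 * (((m : ℝ) / 2) * Real.Gamma ((m : ℝ) / 2)) ^ (2 / (m : ℝ))) /
    Real.Gamma ((m : ℝ) / 2)

lemma incGamma_integrableOn {a : ℝ} (ha : 0 < a) {x : ℝ} (hx : 0 ≤ x) :
    IntegrableOn (fun u : ℝ => u ^ (a - 1) * Real.exp (-u)) (Set.Ioi x) := by
  have h := (Real.GammaIntegral_convergent ha).mono_set (Set.Ioi_subset_Ioi hx)
  exact h.congr_fun (fun u _ => mul_comm _ _) measurableSet_Ioi

lemma incGamma_pos {a : ℝ} (ha : 0 < a) {x : ℝ} (hx : 0 ≤ x) : 0 < incGamma a x := by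
  rw [incGamma, setIntegral_pos_iff_support_of_nonneg_ae]
  · have : Set.Ioi x ⊆ Function.support (fun u : ℝ => u ^ (a - 1) * Real.exp (-u)) ∩ Set.Ioi x := by
      intro u hu
      have hu0 : 0 < u := lt_of_le_of_lt hx hu
      refine ⟨?_, hu⟩
      have : 0 < u ^ (a - 1) * Real.exp (-u) :=
        mul_pos (Real.rpow_pos_of_pos hu0 _) (Real.exp_pos _)
      exact Function.mem_support.mpr (ne_of_gt this)
    calc (0 : ENNReal) < volume (Set.Ioi x) := by simp
      _ ≤ _ := measure_mono this
  · filter_upwards [ae_restrict_mem measurableSet_Ioi] with u hu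
    have hu0 : 0 < u := lt_of_le_of_lt hx hu
    positivity
  · exact incGamma_integrableOn ha hx

lemma incGamma_rec {a x : ℝ} (ha : 0 < a) (hx : 0 < x) :
    incGamma (a + 1) x = a * incGamma a x + x ^ a * Real.exp (-x) := by
  have key : ∫ u in Set.Ioi x, (u ^ a * Real.exp (-u) - a * (u ^ (a - 1) * Real.exp (-u)))
      = x ^ a * Real.exp (-x) := by
    have hderiv : ∀ u ∈ Set.Ici x, HasDerivAt (fun u : ℝ => -(u ^ a * Real.exp (-u)))
        (u ^ a * Real.exp (-u) - a * (u ^ (a - 1) * Real.exp (-u))) u := by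
      intro u hu
      have hu0 : u ≠ 0 := ne_of_gt (lt_of_lt_of_le hx hu)
      have h1 : HasDerivAt (fun u : ℝ => u ^ a) (a * u ^ (a - 1)) u :=
        Real.hasDerivAt_rpow_const (Or.inl hu0)
      have h2 : HasDerivAt (fun u : ℝ => Real.exp (-u)) (-Real.exp (-u)) u := by
        exact ((Real.hasDerivAt_exp (-u)).comp u (hasDerivAt_neg u)).congr_deriv (by ring)
      have := (h1.mul h2).neg
      exact this.congr_deriv (by ring)
    have hint : IntegrableOn (fun u : ℝ =>
        u ^ a * Real.exp (-u) - a * (u ^ (a - 1) * Real.exp (-u))) (Set.Ioi x) := by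
      have h1 : IntegrableOn (fun u : ℝ => u ^ a * Real.exp (-u)) (Set.Ioi x) := by
        have := incGamma_integrableOn (by linarith : (0:ℝ) < a + 1) hx.le
        simpa using this
      exact h1.sub ((incGamma_integrableOn ha hx.le).const_mul a)
    have htend : Tendsto (fun u : ℝ => -(u ^ a * Real.exp (-u))) atTop (nhds 0) := by
      have := tendsto_rpow_mul_exp_neg_mul_atTop_nhds_zero a 1 one_pos
      simp only [neg_mul, one_mul] at this
      simpa using this.neg
    have := integral_Ioi_of_hasDerivAt_of_tendsto' hderiv hint htend
    rw [this]; ring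
  have h1 : IntegrableOn (fun u : ℝ => u ^ a * Real.exp (-u)) (Set.Ioi x) := by
    have := incGamma_integrableOn (by linarith : (0:ℝ) < a + 1) hx.le
    simpa using this
  have h2 := (incGamma_integrableOn ha hx.le).const_mul a
  rw [integral_sub h1 h2, MeasureTheory.integral_const_mul] at key
  have e1 : incGamma (a + 1) x = ∫ u in Set.Ioi x, u ^ a * Real.exp (-u) := by
    rw [incGamma]; norm_num
  rw [e1, incGamma]
  linarith [key]

lemma image_sq_div {t r : ℝ} (ht : 0 < t) (hr : 0 ≤ r) :
    (fun s : ℝ => s ^ 2 / (4 * t)) '' Set.Ioi r = Set.Ioi (r ^ 2 / (4 * t)) := by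
  ext u
  simp only [Set.mem_image, Set.mem_Ioi]
  constructor
  · rintro ⟨s, hs, rfl⟩
    have : r ^ 2 < s ^ 2 := by nlinarith
    exact div_lt_div_of_pos_right this (by linarith)
  · intro hu
    have hu0 : (0:ℝ) < u := lt_of_le_of_lt (by positivity) hu
    have h4tu : (0:ℝ) ≤ 4 * t * u := by positivity
    refine ⟨Real.sqrt (4 * t * u), ?_, ?_⟩
    · have hru : r ^ 2 < 4 * t * u := by
        have := (div_lt_iff₀ (by linarith : (0:ℝ) < 4 * t)).mp hu
        nlinarith
      calc r = Real.sqrt (r ^ 2) := (Real.sqrt_sq hr).symm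
        _ < Real.sqrt (4 * t * u) := Real.sqrt_lt_sqrt (sq_nonneg r) hru
    · rw [Real.sq_sqrt h4tu]
      field_simp

lemma integral_subst {t r : ℝ} (ht : 0 < t) (hr : 0 < r) (g : ℝ → ℝ) :
    ∫ u in Set.Ioi (r ^ 2 / (4 * t)), g u
      = ∫ s in Set.Ioi r, (s / (2 * t)) * g (s ^ 2 / (4 * t)) := by
  rw [← image_sq_div ht hr.le]
  rw [integral_image_eq_integral_abs_deriv_smul measurableSet_Ioi
    (f' := fun s => s / (2 * t)) ?_ ?_ g]
  · apply setIntegral_congr_fun measurableSet_Ioi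
    intro s hs
    have hs0 : 0 < s := lt_trans hr hs
    simp only [smul_eq_mul]
    rw [abs_of_pos (by positivity)]
  · intro s hs
    have : HasDerivAt (fun s : ℝ => s ^ 2 / (4 * t)) (s / (2 * t)) s := by
      have := (hasDerivAt_pow 2 s).div_const (4 * t)
      exact this.congr_deriv (by ring)
    exact this.hasDerivWithinAt
  · intro s hs u hu h
    have hs0 : 0 < s := lt_trans hr hs
    have hu0 : 0 < u := lt_trans hr hu
    have h2 : s ^ 2 = u ^ 2 := by
      field_simp at h
      nlinarith [h]
    nlinarith

lemma integrableOn_pow_mul_exp {t : ℝ} (ht : 0 < t) (k : ℕ) {r : ℝ} (hr : 0 < r) :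
    IntegrableOn (fun s : ℝ => s ^ k * Real.exp (-s ^ 2 / (4 * t))) (Set.Ioi r) := by
  have h := integrable_rpow_mul_exp_neg_mul_sq (b := 1 / (4 * t)) (by positivity)
    (s := (k : ℝ)) (by have : (0:ℝ) ≤ (k:ℝ) := Nat.cast_nonneg k; linarith)
  refine (h.integrableOn).congr_fun ?_ measurableSet_Ioi
  intro s hs
  have hs0 : 0 < s := lt_trans hr hs
  simp only []
  rw [Real.rpow_natCast]
  congr 1
  field_simp

lemma exp_integral_Ioi {t r : ℝ} (ht : 0 < t) (hr : 0 < r) :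
    ∫ s in Set.Ioi r, s / (2 * t) * Real.exp (-s ^ 2 / (4 * t))
      = Real.exp (-(r ^ 2 / (4 * t))) := by
  have h := integral_subst ht hr (fun u => Real.exp (-u))
  rw [integral_exp_neg_Ioi] at h
  rw [h]
  apply setIntegral_congr_fun measurableSet_Ioi
  intro s _
  simp only [neg_div]

lemma pow_exp_integral_Ioi {t r : ℝ} (ht : 0 < t) (hr : 0 < r) {p : ℝ} (hp : 0 < p) :
    ∫ s in Set.Ioi r, s / (2 * t) * s ^ (2 * p) * Real.exp (-s ^ 2 / (4 * t))
      = (4 * t) ^ p * incGamma (p + 1) (r ^ 2 / (4 * t)) := by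
  have e1 : incGamma (p + 1) (r ^ 2 / (4 * t))
      = ∫ u in Set.Ioi (r ^ 2 / (4 * t)), u ^ p * Real.exp (-u) := by
    rw [incGamma]; norm_num
  rw [e1, integral_subst ht hr (fun u => u ^ p * Real.exp (-u)), ← MeasureTheory.integral_const_mul]
  apply setIntegral_congr_fun measurableSet_Ioi
  intro s hs
  have hs0 : 0 < s := lt_trans hr hs
  have h4t : (0:ℝ) < 4 * t := by linarith
  have key : (s ^ 2 / (4 * t)) ^ p = s ^ (2 * p) / (4 * t) ^ p := by
    rw [Real.div_rpow (sq_nonneg s) h4t.le, ← Real.rpow_natCast s 2, ← Real.rpow_mul hs0.le]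
    norm_num
  simp only []
  rw [key, neg_div]
  have h4tp : (0:ℝ) < (4 * t) ^ p := Real.rpow_pos_of_pos h4t p
  field_simp

lemma Jbound {X : Type*} [MetricSpace X] [MeasurableSpace X] [BorelSpace X]
    (μ : Measure X) (x : X) {r t ω E : ℝ} (m : ℕ) (hm : 1 ≤ m) (ht : 0 < t) (hr : 0 < r)
    (hfin : ∀ s : ℝ, μ (Metric.ball x s) ≠ ⊤)
    (hle : ∀ s : ℝ, 0 < s → μ (Metric.ball x s) ≤ ENNReal.ofReal (E * (ω * s ^ m)))
    (hω : 0 < ω) (hE : 0 ≤ E) :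
    ∫⁻ y in (Metric.ball x r)ᶜ, ENNReal.ofReal (Real.exp (-(dist x y) ^ 2 / (4 * t))) ∂μ
      ≤ ENNReal.ofReal (E * ω * ((4 * t) ^ ((m:ℝ)/2) * incGamma ((m:ℝ)/2 + 1) (r ^ 2 / (4 * t)))
          - (μ (Metric.ball x r)).toReal * Real.exp (-(r ^ 2 / (4 * t)))) := by
  set q : ℝ := (m:ℝ)/2 with hq_def
  have hm0 : (0:ℝ) < (m:ℝ) := by exact_mod_cast Nat.lt_of_lt_of_le Nat.zero_lt_one hm
  have hq : 0 < q := by rw [hq_def]; positivity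
  set V : ℝ := (μ (Metric.ball x r)).toReal with hV_def
  have hV0 : 0 ≤ V := ENNReal.toReal_nonneg
  have hμr : μ (Metric.ball x r) = ENNReal.ofReal V := (ENNReal.ofReal_toReal (hfin r)).symm
  have hVle : V ≤ E * (ω * r ^ m) := by
    have := hle r hr
    rw [hμr, ENNReal.ofReal_le_ofReal_iff (by positivity)] at this
    exact this
  set c : ℝ → ENNReal := fun s => ENNReal.ofReal (s / (2*t) * Real.exp (-s ^ 2 / (4*t)))
    with hc_def
  have hcmeas : Measurable c := by
    apply Measurable.ennreal_ofReal
    exact ((continuous_id.div_const (2*t)).mul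
      (((continuous_pow 2).neg.div_const (4*t)).rexp)).measurable
  set g : X → ENNReal := fun y => ENNReal.ofReal (Real.exp (-(dist x y) ^ 2 / (4 * t)))
    with hg_def
  have hgmeas : Measurable g := by
    apply Measurable.ennreal_ofReal
    exact (((continuous_const.dist continuous_id).pow 2).neg.div_const (4*t)).rexp.measurable
  -- pointwise layer-cake identity
  have hpt : ∀ y : X, r ≤ dist x y →
      g y = ∫⁻ s in Set.Ioi r, (Set.Ioi (dist x y)).indicator c s := by
    intro y hd
    have hd0 : 0 < dist x y := lt_of_lt_of_le hr hd
    have h0 : IntegrableOn (fun s : ℝ => 1/(2*t) * (s ^ 1 * Real.exp (-s ^ 2 / (4*t))))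
        (Set.Ioi (dist x y)) := (integrableOn_pow_mul_exp ht 1 hd0).const_mul (1/(2*t))
    have hint : IntegrableOn (fun s : ℝ => s / (2*t) * Real.exp (-s ^ 2 / (4*t)))
        (Set.Ioi (dist x y)) :=
      h0.congr_fun (fun s _ => by simp only [pow_one]; ring) measurableSet_Ioi
    have hnn : 0 ≤ᵐ[volume.restrict (Set.Ioi (dist x y))]
        fun s : ℝ => s / (2*t) * Real.exp (-s ^ 2 / (4*t)) := by
      filter_upwards [ae_restrict_mem measurableSet_Ioi] with s hs
      have hs0 : 0 < s := lt_trans hd0 hs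
      positivity
    have h2 : Real.exp (-(dist x y) ^ 2 / (4 * t))
        = ∫ s in Set.Ioi (dist x y), s / (2*t) * Real.exp (-s ^ 2 / (4*t)) := by
      rw [exp_integral_Ioi ht hd0, neg_div]
    have h1 : g y = ∫⁻ s in Set.Ioi (dist x y), c s := by
      rw [hg_def]
      simp only []
      rw [h2, MeasureTheory.ofReal_integral_eq_lintegral_ofReal hint hnn]
    rw [h1, lintegral_indicator measurableSet_Ioi, Measure.restrict_restrict measurableSet_Ioi,
      Set.inter_eq_left.mpr (Set.Ioi_subset_Ioi hd)]
  -- the sets A n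
  set A : ℕ → Set X := fun n => (Metric.ball x r)ᶜ ∩ Metric.ball x n with hA_def
  have hAmeas : ∀ n, MeasurableSet (A n) :=
    fun n => (measurableSet_ball.compl).inter measurableSet_ball
  have hAfin : ∀ n, μ (A n) < ⊤ := fun n =>
    lt_of_le_of_lt (measure_mono Set.inter_subset_right) (lt_top_iff_ne_top.mpr (hfin n))
  -- the target real quantity
  set RHS : ℝ := E * ω * ((4 * t) ^ q * incGamma (q + 1) (r ^ 2 / (4 * t)))
      - V * Real.exp (-(r ^ 2 / (4 * t))) with hRHS_def
  -- per-n bound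
  have hAn : ∀ n : ℕ, ∫⁻ y in A n, g y ∂μ ≤ ENNReal.ofReal RHS := by
    intro n
    haveI : IsFiniteMeasure (μ.restrict (A n)) :=
      ⟨by rw [Measure.restrict_apply_univ]; exact hAfin n⟩
    have e1 : ∫⁻ y in A n, g y ∂μ
        = ∫⁻ y in A n, ∫⁻ s in Set.Ioi r, (Set.Ioi (dist x y)).indicator c s ∂volume ∂μ := by
      apply setLIntegral_congr_fun (hAmeas n)
      intro y hy
      apply hpt
      have h1 : ¬ dist y x < r := fun h => hy.1 (Metric.mem_ball.mpr h)
      rw [dist_comm]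
      linarith [not_lt.mp h1]
    have hFmeas : Measurable (Function.uncurry fun (y : X) (s : ℝ) =>
        (Set.Ioi (dist x y)).indicator c s) := by
      have hS : MeasurableSet {q : X × ℝ | dist x q.1 < q.2} :=
        measurableSet_lt ((continuous_const.dist continuous_fst).measurable) measurable_snd
      have heq : (Function.uncurry fun (y : X) (s : ℝ) => (Set.Ioi (dist x y)).indicator c s)
          = {q : X × ℝ | dist x q.1 < q.2}.indicator (fun q => c q.2) := by
        funext q
        rcases q with ⟨y, s⟩
        have hmem : ((y, s) ∈ {q : X × ℝ | dist x q.1 < q.2}) ↔ dist x y < s := Iff.rfl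
        by_cases h : dist x y < s
        · rw [Function.uncurry_apply_pair]
          rw [Set.indicator_of_mem (Set.mem_Ioi.mpr h) c,
            Set.indicator_of_mem (hmem.mpr h) (fun q : X × ℝ => c q.2)]
        · rw [Function.uncurry_apply_pair]
          rw [Set.indicator_of_notMem (fun hh => h (Set.mem_Ioi.mp hh)) c,
            Set.indicator_of_notMem (fun hh => h (hmem.mp hh)) (fun q : X × ℝ => c q.2)]
      rw [heq]
      exact (hcmeas.comp measurable_snd).indicator hS
    have e2 : ∫⁻ y in A n, ∫⁻ s in Set.Ioi r, (Set.Ioi (dist x y)).indicator c s ∂volume ∂μ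
        = ∫⁻ s in Set.Ioi r, ∫⁻ y in A n, (Set.Ioi (dist x y)).indicator c s ∂μ ∂volume :=
      lintegral_lintegral_swap hFmeas.aemeasurable
    have e3 : ∀ s ∈ Set.Ioi r, ∫⁻ y in A n, (Set.Ioi (dist x y)).indicator c s ∂μ
        ≤ c s * ENNReal.ofReal (E * (ω * s ^ m) - V) := by
      intro s hs
      have hsr : r < s := hs
      have hind : ∀ y : X, (Set.Ioi (dist x y)).indicator c s
          = (Metric.ball x s).indicator (fun _ => c s) y := by
        intro y
        by_cases h : dist x y < s
        · rw [Set.indicator_of_mem (Set.mem_Ioi.mpr h) c,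
            Set.indicator_of_mem (Metric.mem_ball.mpr (by rwa [dist_comm])) (fun _ => c s)]
        · rw [Set.indicator_of_notMem (fun hh => h (Set.mem_Ioi.mp hh)) c,
            Set.indicator_of_notMem
              (fun hh => h (by rw [dist_comm]; exact Metric.mem_ball.mp hh)) (fun _ => c s)]
      calc ∫⁻ y in A n, (Set.Ioi (dist x y)).indicator c s ∂μ
          = ∫⁻ y in A n, (Metric.ball x s).indicator (fun _ => c s) y ∂μ :=
            lintegral_congr fun y => hind y
        _ = c s * (μ.restrict (A n)) (Metric.ball x s) :=
            lintegral_indicator_const measurableSet_ball _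
        _ = c s * μ (Metric.ball x s ∩ A n) := by rw [Measure.restrict_apply measurableSet_ball]
        _ ≤ c s * ENNReal.ofReal (E * (ω * s ^ m) - V) := by
            apply mul_le_mul_right
            have h1 : Metric.ball x s ∩ A n ⊆ Metric.ball x s \ Metric.ball x r :=
              fun y hy => ⟨hy.1, hy.2.1⟩
            have h2 : μ (Metric.ball x s \ Metric.ball x r)
                = μ (Metric.ball x s) - μ (Metric.ball x r) :=
              measure_diff (Metric.ball_subset_ball hsr.le)
                measurableSet_ball.nullMeasurableSet (hfin r)
            calc μ (Metric.ball x s ∩ A n)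
                ≤ μ (Metric.ball x s \ Metric.ball x r) := measure_mono h1
              _ = μ (Metric.ball x s) - μ (Metric.ball x r) := h2
              _ ≤ ENNReal.ofReal (E * (ω * s ^ m)) - ENNReal.ofReal V := by
                  rw [hμr]
                  exact tsub_le_tsub (hle s (lt_trans hr hsr)) le_rfl
              _ = ENNReal.ofReal (E * (ω * s ^ m) - V) := (ENNReal.ofReal_sub _ hV0).symm
    have e4 : ∫⁻ s in Set.Ioi r, ∫⁻ y in A n, (Set.Ioi (dist x y)).indicator c s ∂μ ∂volume
        ≤ ∫⁻ s in Set.Ioi r, c s * ENNReal.ofReal (E * (ω * s ^ m) - V) ∂volume := by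
      refine lintegral_mono_ae ?_
      filter_upwards [ae_restrict_mem measurableSet_Ioi] with s hs using e3 s hs
    have hI1a : IntegrableOn (fun s : ℝ => 1/(2*t) * (s ^ (m+1) * Real.exp (-s ^ 2/(4*t))))
        (Set.Ioi r) := (integrableOn_pow_mul_exp ht (m+1) hr).const_mul (1/(2*t))
    have hI1 : IntegrableOn (fun s : ℝ => s/(2*t) * s ^ m * Real.exp (-s ^ 2/(4*t)))
        (Set.Ioi r) :=
      hI1a.congr_fun (fun s _ => by simp only [pow_succ]; ring) measurableSet_Ioi
    have hI2a : IntegrableOn (fun s : ℝ => 1/(2*t) * (s ^ 1 * Real.exp (-s ^ 2/(4*t))))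
        (Set.Ioi r) := (integrableOn_pow_mul_exp ht 1 hr).const_mul (1/(2*t))
    have hI2 : IntegrableOn (fun s : ℝ => s/(2*t) * Real.exp (-s ^ 2/(4*t))) (Set.Ioi r) :=
      hI2a.congr_fun (fun s _ => by simp only [pow_one]; ring) measurableSet_Ioi
    have hIa : IntegrableOn (fun s : ℝ =>
        (E*ω) * (s/(2*t) * s ^ m * Real.exp (-s ^ 2/(4*t)))
          - V * (s/(2*t) * Real.exp (-s ^ 2/(4*t)))) (Set.Ioi r) :=
      (hI1.const_mul (E*ω)).sub (hI2.const_mul V)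
    have hI : IntegrableOn (fun s : ℝ =>
        (s/(2*t) * Real.exp (-s ^ 2/(4*t))) * (E * (ω * s ^ m) - V)) (Set.Ioi r) :=
      hIa.congr_fun (fun s _ => by ring) measurableSet_Ioi
    have hnn : 0 ≤ᵐ[volume.restrict (Set.Ioi r)] fun s : ℝ =>
        (s/(2*t) * Real.exp (-s ^ 2/(4*t))) * (E * (ω * s ^ m) - V) := by
      filter_upwards [ae_restrict_mem measurableSet_Ioi] with s hs
      have hs0 : 0 < s := lt_trans hr hs
      have hsub : 0 ≤ E * (ω * s ^ m) - V := by
        have hpow : r ^ m ≤ s ^ m := pow_le_pow_left₀ hr.le (le_of_lt (Set.mem_Ioi.mp hs)) m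
        have h1 : E * (ω * r ^ m) ≤ E * (ω * s ^ m) :=
          mul_le_mul_of_nonneg_left (mul_le_mul_of_nonneg_left hpow hω.le) hE
        linarith [hVle]
      positivity
    have e5 : ∫⁻ s in Set.Ioi r, c s * ENNReal.ofReal (E * (ω * s ^ m) - V) ∂volume
        = ENNReal.ofReal RHS := by
      have hcongr : ∫⁻ s in Set.Ioi r, c s * ENNReal.ofReal (E * (ω * s ^ m) - V) ∂volume
          = ∫⁻ s in Set.Ioi r, ENNReal.ofReal
              ((s/(2*t) * Real.exp (-s ^ 2/(4*t))) * (E * (ω * s ^ m) - V)) ∂volume := by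
        refine lintegral_congr_ae ?_
        filter_upwards [ae_restrict_mem measurableSet_Ioi] with s hs
        have hs0 : 0 < s := lt_trans hr hs
        rw [hc_def]
        rw [← ENNReal.ofReal_mul (by positivity)]
      rw [hcongr, ← MeasureTheory.ofReal_integral_eq_lintegral_ofReal hI hnn]
      congr 1
      have hsm : ∫ s in Set.Ioi r, s/(2*t) * s ^ m * Real.exp (-s ^ 2/(4*t))
          = (4*t) ^ q * incGamma (q+1) (r ^ 2/(4*t)) := by
        rw [← pow_exp_integral_Ioi ht hr hq]
        apply setIntegral_congr_fun measurableSet_Ioi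
        intro s hs
        have hs0 : 0 < s := lt_trans hr hs
        have h2q : s ^ (2*q) = s ^ m := by
          rw [show 2*q = ((m:ℕ):ℝ) by rw [hq_def]; ring, Real.rpow_natCast]
        simp only []
        rw [h2q]
      have hse : ∫ s in Set.Ioi r, s/(2*t) * Real.exp (-s ^ 2/(4*t))
          = Real.exp (-(r ^ 2/(4*t))) := exp_integral_Ioi ht hr
      have hsplit : ∫ s in Set.Ioi r,
          (s/(2*t) * Real.exp (-s ^ 2/(4*t))) * (E * (ω * s ^ m) - V)
          = (E*ω) * (∫ s in Set.Ioi r, s/(2*t) * s ^ m * Real.exp (-s ^ 2/(4*t)))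
            - V * (∫ s in Set.Ioi r, s/(2*t) * Real.exp (-s ^ 2/(4*t))) := by
        have h1 : ∫ s in Set.Ioi r,
            ((E*ω) * (s/(2*t) * s ^ m * Real.exp (-s ^ 2/(4*t)))
              - V * (s/(2*t) * Real.exp (-s ^ 2/(4*t))))
            = (E*ω) * (∫ s in Set.Ioi r, s/(2*t) * s ^ m * Real.exp (-s ^ 2/(4*t)))
              - V * (∫ s in Set.Ioi r, s/(2*t) * Real.exp (-s ^ 2/(4*t))) := by
          rw [integral_sub (hI1.const_mul (E*ω)) (hI2.const_mul V),
            MeasureTheory.integral_const_mul, MeasureTheory.integral_const_mul]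
        rw [← h1]
        apply setIntegral_congr_fun measurableSet_Ioi
        intro s _
        simp only []
        ring
      rw [hsplit, hsm, hse, hRHS_def]
    calc ∫⁻ y in A n, g y ∂μ
        = ∫⁻ s in Set.Ioi r, ∫⁻ y in A n, (Set.Ioi (dist x y)).indicator c s ∂μ ∂volume := by
          rw [e1, e2]
      _ ≤ ∫⁻ s in Set.Ioi r, c s * ENNReal.ofReal (E * (ω * s ^ m) - V) ∂volume := e4
      _ = ENNReal.ofReal RHS := e5
  -- monotone limit
  have hmono : ∫⁻ y in (Metric.ball x r)ᶜ, g y ∂μ = ⨆ n, ∫⁻ y in A n, g y ∂μ := by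
    have hiSup : ∀ y : X, (⨆ n, (A n).indicator g y) = ((Metric.ball x r)ᶜ).indicator g y := by
      intro y
      apply le_antisymm
      · exact iSup_le fun n =>
          Set.indicator_le_indicator_of_subset Set.inter_subset_left (fun _ => zero_le) y
      · by_cases hy : y ∈ (Metric.ball x r)ᶜ
        · obtain ⟨n, hn⟩ := exists_nat_gt (dist y x)
          have hyA : y ∈ A n := ⟨hy, by simpa [Metric.mem_ball] using hn⟩
          calc ((Metric.ball x r)ᶜ).indicator g y = g y := Set.indicator_of_mem hy g
            _ = (A n).indicator g y := (Set.indicator_of_mem hyA g).symm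
            _ ≤ ⨆ n, (A n).indicator g y := le_iSup (fun n => (A n).indicator g y) n
        · rw [Set.indicator_of_notMem hy]
          exact zero_le
    rw [← lintegral_indicator measurableSet_ball.compl]
    have := lintegral_iSup (μ := μ) (f := fun n => (A n).indicator g)
      (fun n => hgmeas.indicator (hAmeas n)) ?_
    · rw [← funext hiSup, this]
      congr 1
      ext n
      exact lintegral_indicator (hAmeas n) g
    · intro n n' hnn'
      intro y
      apply Set.indicator_le_indicator_of_subset
      · exact Set.inter_subset_inter_right _
          (Metric.ball_subset_ball (by exact_mod_cast hnn'))
      · exact fun _ => zero_le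
  rw [show (∫⁻ y in (Metric.ball x r)ᶜ, ENNReal.ofReal (Real.exp (-(dist x y) ^ 2 / (4 * t))) ∂μ)
      = ∫⁻ y in (Metric.ball x r)ᶜ, g y ∂μ from rfl, hmono]
  exact iSup_le hAn

set_option maxHeartbeats 2000000 in
theorem main_theorem {X : Type*} [MetricSpace X] [MeasurableSpace X] [BorelSpace X]
    (μ : Measure X) (m : ℕ) (hm : 1 ≤ m) (x : X)
    (H : ℝ → X → X → ℝ)
    (Hmeas : ∀ t : ℝ, 0 < t → Measurable (Function.uncurry (H t)))
    (Hnonneg : ∀ t : ℝ, 0 < t → ∀ z y : X, 0 ≤ H t z y)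
    (Hsymm : ∀ t : ℝ, 0 < t → ∀ z y : X, H t z y = H t y z)
    (Hsemigroup : ∀ t s : ℝ, 0 < t → 0 < s → ∀ z y : X,
      H (t + s) z y = ∫ w, H t z w * H s w y ∂μ)
    (Hstoch : ∀ t : ℝ, 0 < t → ∀ z : X, ∫ y, H t z y ∂μ = 1)
    (Hmark : ∀ t : ℝ, 0 < t → ∀ z y : X,
      H t z y ≤ (4 * π * t) ^ (-(m : ℝ) / 2) * Real.exp (-(dist z y) ^ 2 / (4 * t)))
    (E : ℝ)
    (Qmono : ∀ s₁ s₂ : ℝ, 0 < s₁ → s₁ ≤ s₂ →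
      (μ (Metric.ball x s₁)).toReal / (omegaBall m * s₁ ^ m) ≤
        (μ (Metric.ball x s₂)).toReal / (omegaBall m * s₂ ^ m))
    (Qlim : Tendsto (fun s : ℝ => (μ (Metric.ball x s)).toReal / (omegaBall m * s ^ m))
      atTop (nhds E))
    (hE : 0 < E) (hEC : E < 1 / Cm m) :
    (1 - E * Cm m) ^ 2 / E ≤
        limsup (fun t : ℝ => (4 * π * t) ^ ((m : ℝ) / 2) * H t x x) atTop ∧
      limsup (fun t : ℝ => (4 * π * t) ^ ((m : ℝ) / 2) * H t x x) atTop ≤ 1 := by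
  -- basic constants
  have hm0 : (0:ℝ) < (m:ℝ) := by exact_mod_cast Nat.lt_of_lt_of_le Nat.zero_lt_one hm
  set p : ℝ := (m:ℝ)/2 with hp_def
  have hp : 0 < p := by rw [hp_def]; positivity
  have hΓp : 0 < Real.Gamma p := Real.Gamma_pos_of_pos hp
  have hΓp1 : 0 < Real.Gamma (p+1) := Real.Gamma_pos_of_pos (by linarith)
  have hΓrec : Real.Gamma (p+1) = p * Real.Gamma p := Real.Gamma_add_one (ne_of_gt hp)
  set a₀ : ℝ := 2 * (p * Real.Gamma p) ^ (2/(m:ℝ)) with ha₀_def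
  have ha₀ : 0 < a₀ := by
    have := Real.rpow_pos_of_pos (mul_pos hp hΓp) (2/(m:ℝ))
    rw [ha₀_def]; linarith
  have ha₀p : a₀ ^ p = 2 ^ p * Real.Gamma (p+1) := by
    rw [ha₀_def, Real.mul_rpow (by norm_num) (Real.rpow_nonneg (mul_pos hp hΓp).le _),
      ← Real.rpow_mul (mul_pos hp hΓp).le]
    have : 2/(m:ℝ) * p = 1 := by
      rw [hp_def]; field_simp
    rw [this, Real.rpow_one, hΓrec]
  have hω : omegaBall m = π ^ p / Real.Gamma (p+1) := rfl
  have hωpos : 0 < omegaBall m := by rw [hω]; positivity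
  have hCm : Cm m = incGamma p a₀ / Real.Gamma p := rfl
  have hCmpos : 0 < Cm m := by
    rw [hCm]; exact div_pos (incGamma_pos hp ha₀.le) hΓp
  have hECm : E * Cm m < 1 := by
    have h2 := (lt_div_iff₀ hCmpos).mp hEC
    linarith
  set Q : ℝ → ℝ := fun s => (μ (Metric.ball x s)).toReal / (omegaBall m * s ^ m) with hQ_def
  have hQlim : Tendsto Q atTop (nhds E) := Qlim
  have hQmono : ∀ s₁ s₂ : ℝ, 0 < s₁ → s₁ ≤ s₂ → Q s₁ ≤ Q s₂ := Qmono
  -- all balls have finite measure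
  have hballfin : ∀ s : ℝ, μ (Metric.ball x s) ≠ ⊤ := by
    intro s
    obtain ⟨S, hSQ, hSs⟩ := ((hQlim.eventually_const_lt (by linarith : E/2 < E)).and
      (eventually_ge_atTop (max s 1))).exists
    have hSfin : μ (Metric.ball x S) ≠ ⊤ := by
      intro htop
      rw [hQ_def] at hSQ
      simp only [htop, ENNReal.toReal_top, zero_div] at hSQ
      linarith
    have : μ (Metric.ball x s) ≤ μ (Metric.ball x S) :=
      measure_mono (Metric.ball_subset_ball (le_trans (le_max_left _ _) hSs))
    exact fun htop => hSfin (top_le_iff.mp (htop ▸ this))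
  have hQleE : ∀ s : ℝ, 0 < s → Q s ≤ E := by
    intro s hs
    refine ge_of_tendsto hQlim ?_
    filter_upwards [eventually_ge_atTop s] with σ hσ
    exact hQmono s σ hs hσ
  have hμle : ∀ s : ℝ, 0 < s →
      μ (Metric.ball x s) ≤ ENNReal.ofReal (E * (omegaBall m * s ^ m)) := by
    intro s hs
    have hden : 0 < omegaBall m * s ^ m := by positivity
    have h1 : (μ (Metric.ball x s)).toReal ≤ E * (omegaBall m * s ^ m) := by
      have := hQleE s hs
      rw [hQ_def] at this
      calc (μ (Metric.ball x s)).toReal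
          = (μ (Metric.ball x s)).toReal / (omegaBall m * s ^ m) * (omegaBall m * s ^ m) := by
            field_simp
        _ ≤ E * (omegaBall m * s ^ m) := by
            apply mul_le_mul_of_nonneg_right this hden.le
    calc μ (Metric.ball x s) = ENNReal.ofReal (μ (Metric.ball x s)).toReal :=
          (ENNReal.ofReal_toReal (hballfin s)).symm
      _ ≤ ENNReal.ofReal (E * (omegaBall m * s ^ m)) := ENNReal.ofReal_le_ofReal h1
  -- the key per-radius estimate
  have key : ∀ r : ℝ, 0 < r → 0 < Q r →
      (max (1 - E * incGamma (p+1) a₀ / Real.Gamma (p+1)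
          + Q r * (a₀ ^ p * Real.exp (-a₀) / Real.Gamma (p+1))) 0) ^ 2 / Q r
        ≤ (4 * π * (r^2/(2*a₀))) ^ p * H (r^2/(2*a₀)) x x := by
    intro r hr hQr
    set t : ℝ := r^2/(4*a₀) with ht_def
    have ht : 0 < t := by
      rw [ht_def]
      exact div_pos (pow_pos hr 2) (by linarith)
    have h2t : 0 < 2*t := by linarith
    have hrne : r ≠ 0 := ne_of_gt hr
    have ha₀ne : a₀ ≠ 0 := ne_of_gt ha₀
    have hrt : r^2/(4*t) = a₀ := by
      rw [ht_def]
      field_simp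
    have hτeq : r^2/(2*a₀) = 2*t := by
      rw [ht_def]
      field_simp
      ring
    set V : ℝ := (μ (Metric.ball x r)).toReal with hV_def
    have hV0 : 0 ≤ V := ENNReal.toReal_nonneg
    have hden : 0 < omegaBall m * r ^ m := by positivity
    have hQrV : Q r = V / (omegaBall m * r ^ m) := rfl
    have hV : 0 < V := by
      rw [hQrV] at hQr
      rcases div_pos_iff.mp hQr with ⟨h1, _⟩ | ⟨_, h2⟩
      · exact h1
      · linarith
    have hVQ : V = Q r * (omegaBall m * r ^ m) := by
      rw [hQrV]; field_simp
    have hμr : μ (Metric.ball x r) = ENNReal.ofReal V := (ENNReal.ofReal_toReal (hballfin r)).symm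
    have hfmeas : Measurable (fun y => H t x y) := (Hmeas t ht).comp measurable_prodMk_left
    have hfint : Integrable (fun y => H t x y) μ := by
      by_contra hc
      have h0 := integral_undef hc
      rw [Hstoch t ht x] at h0
      norm_num at h0
    have hlint1 : ∫⁻ y, ENNReal.ofReal (H t x y) ∂μ = 1 := by
      rw [← MeasureTheory.ofReal_integral_eq_lintegral_ofReal hfint
        (Eventually.of_forall (Hnonneg t ht x)), Hstoch t ht x, ENNReal.ofReal_one]
    have h4πt : (0:ℝ) < 4*π*t := by
      have := Real.pi_pos
      positivity
    have hc0 : (0:ℝ) < (4*π*t) ^ (-p) := Real.rpow_pos_of_pos h4πt _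
    have hfle : ∀ y, H t x y ≤ (4*π*t) ^ (-p) * Real.exp (-(dist x y)^2/(4*t)) := by
      intro y
      have h1 := Hmark t ht x y
      rwa [show -(m:ℝ)/2 = -p by rw [hp_def]; ring] at h1
    set OUT : ℝ := E * omegaBall m * ((4*t) ^ p * incGamma (p+1) a₀) - V * Real.exp (-a₀)
      with hOUT_def
    have hJ : ∫⁻ y in (Metric.ball x r)ᶜ, ENNReal.ofReal (Real.exp (-(dist x y)^2/(4*t))) ∂μ
        ≤ ENNReal.ofReal OUT := by
      have h1 := Jbound μ x m hm ht hr hballfin (fun s hs => hμle s hs) hωpos hE.le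
      rw [hrt] at h1
      exact h1
    have hout : ∫⁻ y in (Metric.ball x r)ᶜ, ENNReal.ofReal (H t x y) ∂μ
        ≤ ENNReal.ofReal ((4*π*t) ^ (-p) * OUT) := by
      calc ∫⁻ y in (Metric.ball x r)ᶜ, ENNReal.ofReal (H t x y) ∂μ
          ≤ ∫⁻ y in (Metric.ball x r)ᶜ, ENNReal.ofReal ((4*π*t) ^ (-p))
              * ENNReal.ofReal (Real.exp (-(dist x y)^2/(4*t))) ∂μ := by
            refine lintegral_mono fun y => ?_
            rw [← ENNReal.ofReal_mul hc0.le]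
            exact ENNReal.ofReal_le_ofReal (hfle y)
        _ = ENNReal.ofReal ((4*π*t) ^ (-p)) * ∫⁻ y in (Metric.ball x r)ᶜ,
              ENNReal.ofReal (Real.exp (-(dist x y)^2/(4*t))) ∂μ := by
            apply lintegral_const_mul
            exact ((((continuous_const.dist continuous_id).pow 2).neg.div_const
              (4*t)).rexp).measurable.ennreal_ofReal
        _ ≤ ENNReal.ofReal ((4*π*t) ^ (-p)) * ENNReal.ofReal OUT := mul_le_mul_right hJ _
        _ = ENNReal.ofReal ((4*π*t) ^ (-p) * OUT) := (ENNReal.ofReal_mul hc0.le).symm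
    have hrm : (r:ℝ) ^ m = (4*t) ^ p * a₀ ^ p := by
      have hr2 : r^2 = 4*t*a₀ := by rw [ht_def]; field_simp
      have h1 : (r:ℝ) ^ m = (r^2) ^ p := by
        have h2 : ((r ^ 2 : ℝ)) ^ p = r ^ ((2:ℝ) * p) := by
          rw [← Real.rpow_natCast r 2, ← Real.rpow_mul hr.le]
          norm_num
        rw [h2, show (2:ℝ) * p = ((m:ℕ):ℝ) by rw [hp_def]; ring, Real.rpow_natCast]
      rw [h1, hr2, Real.mul_rpow (by positivity) ha₀.le]
    have hIG : incGamma (p+1) a₀ = p * incGamma p a₀ + a₀ ^ p * Real.exp (-a₀) :=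
      incGamma_rec hp ha₀
    have hVle : V ≤ E * (omegaBall m * r ^ m) := by
      have h1 := hμle r hr
      rw [hμr, ENNReal.ofReal_le_ofReal_iff (by positivity)] at h1
      exact h1
    have hOUTnn : 0 ≤ OUT := by
      rw [hOUT_def]
      have h1 : V * Real.exp (-a₀)
          ≤ E * omegaBall m * ((4*t) ^ p * (a₀ ^ p * Real.exp (-a₀))) := by
        calc V * Real.exp (-a₀) ≤ (E * (omegaBall m * r ^ m)) * Real.exp (-a₀) :=
              mul_le_mul_of_nonneg_right hVle (Real.exp_pos _).le
          _ = E * omegaBall m * ((4*t) ^ p * (a₀ ^ p * Real.exp (-a₀))) := by rw [hrm]; ring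
      have h2 : a₀ ^ p * Real.exp (-a₀) ≤ incGamma (p+1) a₀ := by
        rw [hIG]
        nlinarith [incGamma_pos hp ha₀.le]
      have h3 : E * omegaBall m * ((4*t) ^ p * (a₀ ^ p * Real.exp (-a₀)))
          ≤ E * omegaBall m * ((4*t) ^ p * incGamma (p+1) a₀) := by
        apply mul_le_mul_of_nonneg_left
          (mul_le_mul_of_nonneg_left h2 (Real.rpow_nonneg (by linarith) p))
        positivity
      linarith
    set OUT' : ℝ := (4*π*t) ^ (-p) * OUT with hOUT'_def
    have hOUT'nn : 0 ≤ OUT' := mul_nonneg hc0.le hOUTnn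
    have hmeasof : Measurable (fun y => ENNReal.ofReal (H t x y)) := hfmeas.ennreal_ofReal
    have hBge : ENNReal.ofReal (1 - OUT')
        ≤ ∫⁻ y in Metric.ball x r, ENNReal.ofReal (H t x y) ∂μ := by
      by_cases hcase : 1 - OUT' ≤ 0
      · rw [ENNReal.ofReal_eq_zero.mpr hcase]
        exact zero_le
      push_neg at hcase
      have hclose : ∫⁻ y in (Metric.ball x r)ᶜ, ENNReal.ofReal (H t x y) ∂μ ≠ ⊤ :=
        ne_top_of_le_ne_top ENNReal.ofReal_ne_top hout
      rw [← ENNReal.add_le_add_iff_right hclose]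
      calc ENNReal.ofReal (1 - OUT') + ∫⁻ y in (Metric.ball x r)ᶜ, ENNReal.ofReal (H t x y) ∂μ
          ≤ ENNReal.ofReal (1 - OUT') + ENNReal.ofReal OUT' := add_le_add_right hout _
        _ = ENNReal.ofReal 1 := by
            rw [← ENNReal.ofReal_add (by linarith) hOUT'nn]
            norm_num
        _ = 1 := ENNReal.ofReal_one
        _ = ∫⁻ y, ENNReal.ofReal (H t x y) ∂μ := hlint1.symm
        _ = (∫⁻ y in Metric.ball x r, ENNReal.ofReal (H t x y) ∂μ)
            + ∫⁻ y in (Metric.ball x r)ᶜ, ENNReal.ofReal (H t x y) ∂μ :=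
            (lintegral_add_compl _ measurableSet_ball).symm
    -- Cauchy–Schwarz
    have hCS : (∫⁻ y in Metric.ball x r, ENNReal.ofReal (H t x y) ∂μ)
        ≤ (∫⁻ y in Metric.ball x r, ENNReal.ofReal (H t x y) ^ (2:ℝ) ∂μ) ^ (1/2:ℝ)
          * (μ (Metric.ball x r)) ^ (1/2:ℝ) := by
      have hconj : Real.HolderConjugate 2 2 := Real.HolderConjugate.two_two
      have h := ENNReal.lintegral_mul_le_Lp_mul_Lq (μ.restrict (Metric.ball x r)) hconj
        hmeasof.aemeasurable (aemeasurable_const (b := (1:ENNReal)))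
      simpa using h
    -- semigroup and integrability of the square
    have hsemi : H (2*t) x x = ∫ w, (H t x w)^2 ∂μ := by
      have h1 := Hsemigroup t t ht ht x x
      rw [show t + t = 2*t by ring] at h1
      rw [h1]
      refine integral_congr_ae (Eventually.of_forall fun w => ?_)
      show H t x w * H t w x = H t x w ^ 2
      rw [sq, Hsymm t ht w x]
    have hint2 : Integrable (fun y => (H t x y)^2) μ := by
      apply Integrable.mono (hfint.const_mul ((4*π*t) ^ (-p)))
        ((hfmeas.pow_const 2)).aestronglyMeasurable
      filter_upwards [] with y
      have hexp1 : Real.exp (-(dist x y)^2/(4*t)) ≤ 1 := by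
        rw [show (1:ℝ) = Real.exp 0 by rw [Real.exp_zero]]
        apply Real.exp_le_exp.mpr
        rw [neg_div]
        have : (0:ℝ) ≤ (dist x y)^2/(4*t) := by positivity
        linarith
      have hHle : H t x y ≤ (4*π*t) ^ (-p) := by
        calc H t x y ≤ (4*π*t) ^ (-p) * Real.exp (-(dist x y)^2/(4*t)) := hfle y
          _ ≤ (4*π*t) ^ (-p) * 1 := mul_le_mul_of_nonneg_left hexp1 hc0.le
          _ = (4*π*t) ^ (-p) := mul_one _
      rw [Real.norm_eq_abs, Real.norm_eq_abs, abs_of_nonneg (sq_nonneg _),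
        abs_of_nonneg (mul_nonneg hc0.le (Hnonneg t ht x y))]
      calc (H t x y)^2 = H t x y * H t x y := sq (H t x y)
        _ ≤ (4*π*t) ^ (-p) * H t x y :=
            mul_le_mul_of_nonneg_right hHle (Hnonneg t ht x y)
    have hL2 : (∫⁻ y in Metric.ball x r, ENNReal.ofReal (H t x y) ^ (2:ℝ) ∂μ)
        ≤ ENNReal.ofReal (H (2*t) x x) := by
      have e1 : ∀ y : X, ENNReal.ofReal (H t x y) ^ (2:ℝ) = ENNReal.ofReal ((H t x y)^2) := by
        intro y
        rw [show ((H t x y)^2 : ℝ) = (H t x y) ^ (2:ℝ) by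
          rw [← Real.rpow_natCast (H t x y) 2]; norm_num]
        exact ENNReal.ofReal_rpow_of_nonneg (Hnonneg t ht x y) (by norm_num)
      calc (∫⁻ y in Metric.ball x r, ENNReal.ofReal (H t x y) ^ (2:ℝ) ∂μ)
          = ∫⁻ y in Metric.ball x r, ENNReal.ofReal ((H t x y)^2) ∂μ :=
            lintegral_congr fun y => e1 y
        _ ≤ ∫⁻ y, ENNReal.ofReal ((H t x y)^2) ∂μ := setLIntegral_le_lintegral _ _
        _ = ENNReal.ofReal (∫ y, (H t x y)^2 ∂μ) :=
            (MeasureTheory.ofReal_integral_eq_lintegral_ofReal hint2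
              (Eventually.of_forall fun y => sq_nonneg _)).symm
        _ = ENNReal.ofReal (H (2*t) x x) := by rw [← hsemi]
    have hhalf : ∀ z : ENNReal, z ^ (1/2:ℝ) * z ^ (1/2:ℝ) = z := by
      intro z
      rw [← ENNReal.rpow_add_of_nonneg (1/2) (1/2) (by norm_num) (by norm_num)]
      norm_num
    have hfinal : (max (1 - OUT') 0)^2 ≤ H (2*t) x x * V := by
      rcases le_or_gt (1 - OUT') 0 with hβ | hβ
      · rw [max_eq_right hβ]
        have := Hnonneg (2*t) h2t x x
        nlinarith
      · rw [max_eq_left hβ.le]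
        have c1 : ENNReal.ofReal (1 - OUT')
            ≤ (ENNReal.ofReal (H (2*t) x x * V)) ^ (1/2:ℝ) := by
          calc ENNReal.ofReal (1 - OUT')
              ≤ ∫⁻ y in Metric.ball x r, ENNReal.ofReal (H t x y) ∂μ := hBge
            _ ≤ (∫⁻ y in Metric.ball x r, ENNReal.ofReal (H t x y) ^ (2:ℝ) ∂μ) ^ (1/2:ℝ)
                * (μ (Metric.ball x r)) ^ (1/2:ℝ) := hCS
            _ ≤ (ENNReal.ofReal (H (2*t) x x)) ^ (1/2:ℝ)
                * (ENNReal.ofReal V) ^ (1/2:ℝ) := by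
                apply mul_le_mul'
                · exact ENNReal.rpow_le_rpow hL2 (by norm_num)
                · rw [hμr]
            _ = (ENNReal.ofReal (H (2*t) x x * V)) ^ (1/2:ℝ) := by
                rw [ENNReal.ofReal_mul (Hnonneg (2*t) h2t x x),
                  ENNReal.mul_rpow_of_nonneg _ _ (by norm_num)]
        have c2 : ENNReal.ofReal ((1 - OUT')^2) ≤ ENNReal.ofReal (H (2*t) x x * V) := by
          calc ENNReal.ofReal ((1 - OUT')^2)
              = ENNReal.ofReal (1 - OUT') * ENNReal.ofReal (1 - OUT') := by
                rw [sq, ENNReal.ofReal_mul hβ.le]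
            _ ≤ (ENNReal.ofReal (H (2*t) x x * V)) ^ (1/2:ℝ)
                * (ENNReal.ofReal (H (2*t) x x * V)) ^ (1/2:ℝ) := mul_le_mul' c1 c1
            _ = ENNReal.ofReal (H (2*t) x x * V) := hhalf _
        exact (ENNReal.ofReal_le_ofReal_iff
          (mul_nonneg (Hnonneg (2*t) h2t x x) hV0)).mp c2
    -- algebraic identities
    have h4πtp : (4*π*t) ^ p = (4*t) ^ p * π ^ p := by
      rw [show 4*π*t = (4*t)*π by ring, Real.mul_rpow (by positivity) Real.pi_pos.le]
    have h4tpne : (4*t:ℝ) ^ p ≠ 0 := ne_of_gt (Real.rpow_pos_of_pos (by linarith) p)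
    have hπpne : (π:ℝ) ^ p ≠ 0 := ne_of_gt (Real.rpow_pos_of_pos Real.pi_pos p)
    have hβeq : 1 - OUT' = 1 - E * incGamma (p+1) a₀ / Real.Gamma (p+1)
        + Q r * (a₀ ^ p * Real.exp (-a₀) / Real.Gamma (p+1)) := by
      rw [hOUT'_def, hOUT_def, Real.rpow_neg (by positivity), h4πtp, hVQ, hω, hrm, ha₀p]
      field_simp
      ring
    have hOmega : (4*π*(2*t)) ^ p = omegaBall m * r ^ m := by
      rw [hω, hrm, ha₀p, show 4*π*(2*t) = (4*t)*π*2 by ring,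
        Real.mul_rpow (by positivity) (by norm_num),
        Real.mul_rpow (by positivity) Real.pi_pos.le]
      field_simp
    rw [hτeq, ← hβeq, div_le_iff₀ hQr]
    calc (max (1 - OUT') 0)^2 ≤ H (2*t) x x * V := hfinal
      _ = (4*π*(2*t)) ^ p * H (2*t) x x * Q r := by rw [hVQ, hOmega]; ring
  -- limit of the lower-bound function
  have hIG0 : incGamma (p+1) a₀ = p * incGamma p a₀ + a₀ ^ p * Real.exp (-a₀) :=
    incGamma_rec hp ha₀
  have hβlim : Tendsto (fun r : ℝ => 1 - E * incGamma (p+1) a₀ / Real.Gamma (p+1)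
      + Q r * (a₀ ^ p * Real.exp (-a₀) / Real.Gamma (p+1))) atTop
      (nhds (1 - E * Cm m)) := by
    have h1 : Tendsto (fun r : ℝ => Q r * (a₀ ^ p * Real.exp (-a₀) / Real.Gamma (p+1)))
        atTop (nhds (E * (a₀ ^ p * Real.exp (-a₀) / Real.Gamma (p+1)))) :=
      hQlim.mul_const _
    have h2 := h1.const_add (1 - E * incGamma (p+1) a₀ / Real.Gamma (p+1))
    have hval : 1 - E * incGamma (p+1) a₀ / Real.Gamma (p+1)
        + E * (a₀ ^ p * Real.exp (-a₀) / Real.Gamma (p+1)) = 1 - E * Cm m := by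
      rw [hIG0, hCm, hΓrec]
      have hΓpne : Real.Gamma p ≠ 0 := ne_of_gt hΓp
      have hpne : p ≠ 0 := ne_of_gt hp
      field_simp
      ring
    rw [← hval]
    exact h2
  have hmax : max (1 - E * Cm m) 0 = 1 - E * Cm m := max_eq_left (by linarith)
  have hglim : Tendsto (fun r : ℝ => (max (1 - E * incGamma (p+1) a₀ / Real.Gamma (p+1)
      + Q r * (a₀ ^ p * Real.exp (-a₀) / Real.Gamma (p+1))) 0) ^ 2 / Q r) atTop
      (nhds ((1 - E * Cm m) ^ 2 / E)) := by
    have h1 := ((hβlim.max (tendsto_const_nhds (x := (0:ℝ)))).pow 2).div hQlim (ne_of_gt hE)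
    rw [hmax] at h1
    exact h1
  have hQev : ∀ᶠ r in atTop, 0 < Q r := hQlim.eventually_const_lt hE
  set F : ℝ → ℝ := fun τ => (4*π*τ) ^ p * H τ x x with hF_def
  have hFub : ∀ᶠ τ : ℝ in atTop, F τ ≤ 1 := by
    filter_upwards [eventually_gt_atTop 0] with τ hτ
    have h4πτ : (0:ℝ) < 4*π*τ := by
      have := Real.pi_pos
      positivity
    have h1 : H τ x x ≤ (4*π*τ) ^ (-p) := by
      have h2 := Hmark τ hτ x x
      rw [dist_self] at h2
      rw [show -(0:ℝ)^2/(4*τ) = 0 by norm_num, Real.exp_zero, mul_one,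
        show -(m:ℝ)/2 = -p by rw [hp_def]; ring] at h2
      exact h2
    calc F τ = (4*π*τ) ^ p * H τ x x := rfl
      _ ≤ (4*π*τ) ^ p * (4*π*τ) ^ (-p) :=
          mul_le_mul_of_nonneg_left h1 (Real.rpow_nonneg h4πτ.le p)
      _ = 1 := by
          rw [← Real.rpow_add h4πτ]
          norm_num
  have hFlb : ∀ᶠ τ : ℝ in atTop, 0 ≤ F τ := by
    filter_upwards [eventually_gt_atTop 0] with τ hτ
    have h4πτ : (0:ℝ) ≤ 4*π*τ := by
      have := Real.pi_pos
      positivity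
    exact mul_nonneg (Real.rpow_nonneg h4πτ p) (Hnonneg τ hτ x x)
  have hbddab : IsBoundedUnder (· ≤ ·) atTop F := isBoundedUnder_of_eventually_le hFub
  have hbddbl : IsBoundedUnder (· ≥ ·) atTop F := isBoundedUnder_of_eventually_ge hFlb
  have hupper : limsup F atTop ≤ 1 := limsup_le_of_le hbddbl.isCoboundedUnder_le hFub
  have hσ : Tendsto (fun r : ℝ => r^2/(2*a₀)) atTop atTop :=
    (tendsto_pow_atTop (by norm_num : 2 ≠ 0)).atTop_div_const (by linarith)
  have hlower : (1 - E * Cm m) ^ 2 / E ≤ limsup F atTop := by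
    refine le_of_forall_lt fun c hc => ?_
    set L : ℝ := (1 - E * Cm m) ^ 2 / E with hL_def
    have hcL : c < L := hc
    set c' : ℝ := (c + L)/2 with hc'_def
    have hcc' : c < c' := by rw [hc'_def]; linarith
    have hc'L : c' < L := by rw [hc'_def]; linarith
    have hfreq : ∃ᶠ τ in atTop, c' ≤ F τ := by
      rw [frequently_atTop]
      intro b
      obtain ⟨r, ⟨⟨hgr, hQr, hr⟩, hb⟩⟩ :=
        (((hglim.eventually_const_lt hc'L).and (hQev.and (eventually_gt_atTop 0))).and
          (hσ.eventually_ge_atTop b)).exists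
      refine ⟨r^2/(2*a₀), hb, ?_⟩
      exact le_trans hgr.le (key r hr hQr)
    have := le_limsup_of_frequently_le hfreq hbddab
    linarith
  exact ⟨hlower, hupper⟩
end

section
/- Let (X,d) be a metric space equipped with a Borel measure μ, let m ≥ 1 be an integer, and fix x ∈ X. Assume that the function s ↦ μ(B_s(x))/(ω_m s^m) is nondecreasing on (0,∞) and converges, as s → ∞, to a limit E ∈ (0,∞). For t > 0 set R_t := 2·((m/2)·Γ(m/2))^{1/m}·t^{1/2}. Then limsup_{t→∞} ∫_{X∖B_{R_t}(x)} (2πt)^{-m/2}·exp(-d(x,y)²/(2t)) dμ(y) ≤ E·C_m. -/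
open MeasureTheory Real Filter Set

lemma incGamma_nonneg {a x : ℝ} (hx : 0 ≤ x) : 0 ≤ incGamma a x :=
  setIntegral_nonneg measurableSet_Ioi fun u hu =>
    mul_nonneg (Real.rpow_nonneg (hx.trans (le_of_lt hu)) _) (Real.exp_pos _).le

lemma integrableOn_gamma_integrand {p : ℝ} (hp : 0 < p) {x : ℝ} (hx : 0 ≤ x) :
    IntegrableOn (fun u : ℝ => u ^ (p - 1) * Real.exp (-u)) (Set.Ioi x) := by
  have h2 : IntegrableOn (fun u : ℝ => Real.exp (-u) * u ^ (p - 1)) (Set.Ioi x) :=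
    (Real.GammaIntegral_convergent hp).mono_set (Set.Ioi_subset_Ioi hx)
  simpa [mul_comm] using h2

lemma incGamma_succ {p x : ℝ} (hp : 0 < p) (hx : 0 < x) :
    incGamma (p + 1) x = p * incGamma p x + x ^ p * Real.exp (-x) := by
  have key : ∫ u in Set.Ioi x, (u ^ p * Real.exp (-u) - p * (u ^ (p - 1) * Real.exp (-u)))
      = x ^ p * Real.exp (-x) := by
    have hderiv : ∀ u ∈ Set.Ici x, HasDerivAt (fun u : ℝ => -(u ^ p * Real.exp (-u)))
        (u ^ p * Real.exp (-u) - p * (u ^ (p - 1) * Real.exp (-u))) u := by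
      intro u hu
      have hu0 : u ≠ 0 := (lt_of_lt_of_le hx hu).ne'
      have h1 : HasDerivAt (fun u : ℝ => u ^ p) (p * u ^ (p - 1)) u :=
        Real.hasDerivAt_rpow_const (Or.inl hu0)
      have h2 : HasDerivAt (fun u : ℝ => Real.exp (-u)) (-Real.exp (-u)) u := by
        simpa using ((hasDerivAt_id u).neg).exp
      have : HasDerivAt (fun u : ℝ => -(u ^ p * Real.exp (-u)))
          (-(p * u ^ (p - 1) * Real.exp (-u) + u ^ p * -Real.exp (-u))) u := (h1.mul h2).neg
      convert this using 1
      ring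
    have hint : IntegrableOn
        (fun u : ℝ => u ^ p * Real.exp (-u) - p * (u ^ (p - 1) * Real.exp (-u)))
        (Set.Ioi x) := by
      have i1 : IntegrableOn (fun u : ℝ => u ^ p * Real.exp (-u)) (Set.Ioi x) := by
        have := integrableOn_gamma_integrand (p := p + 1) (by linarith) hx.le
        simpa using this
      exact i1.sub ((integrableOn_gamma_integrand hp hx.le).const_mul p)
    have htend : Tendsto (fun u : ℝ => -(u ^ p * Real.exp (-u))) atTop (nhds 0) := by
      have := tendsto_rpow_mul_exp_neg_mul_atTop_nhds_zero p 1 one_pos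
      simp only [neg_mul, one_mul] at this
      simpa using this.neg
    have := integral_Ioi_of_hasDerivAt_of_tendsto' hderiv hint htend
    rw [this]; ring
  have i1 : IntegrableOn (fun u : ℝ => u ^ p * Real.exp (-u)) (Set.Ioi x) := by
    have := integrableOn_gamma_integrand (p := p + 1) (by linarith) hx.le
    simpa using this
  have i2 : IntegrableOn (fun u : ℝ => p * (u ^ (p - 1) * Real.exp (-u))) (Set.Ioi x) :=
    (integrableOn_gamma_integrand hp hx.le).const_mul p
  rw [integral_sub i1 i2, integral_const_mul] at key
  have e1 : incGamma (p + 1) x = ∫ u in Set.Ioi x, u ^ p * Real.exp (-u) := by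
    simp [incGamma]
  rw [e1]
  have e2 : incGamma p x = ∫ u in Set.Ioi x, u ^ (p - 1) * Real.exp (-u) := rfl
  rw [e2]; linarith

set_option maxHeartbeats 2000000 in
theorem tail_integral_limsup {X : Type*} [MetricSpace X] [MeasurableSpace X] [BorelSpace X]
    (μ : Measure X) (m : ℕ) (hm : 1 ≤ m) (x : X) (E : ℝ) (hE : 0 < E)
    (Qmono : ∀ s₁ s₂ : ℝ, 0 < s₁ → s₁ ≤ s₂ →
      (μ (Metric.ball x s₁)).toReal / (omegaBall m * s₁ ^ m) ≤
        (μ (Metric.ball x s₂)).toReal / (omegaBall m * s₂ ^ m))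
    (Qlim : Tendsto (fun s : ℝ => (μ (Metric.ball x s)).toReal / (omegaBall m * s ^ m))
      atTop (nhds E)) :
    limsup (fun t : ℝ =>
        ∫ y in (Metric.ball x
            (2 * (((m : ℝ) / 2) * Real.Gamma ((m : ℝ) / 2)) ^ (1 / (m : ℝ)) *
              t ^ ((1 : ℝ) / 2)))ᶜ,
          (2 * π * t) ^ (-(m : ℝ) / 2) * Real.exp (-(dist x y) ^ 2 / (2 * t)) ∂μ)
      atTop ≤ E * Cm m := by
  have hm0 : (0:ℝ) < (m:ℝ) := by exact_mod_cast Nat.lt_of_lt_of_le Nat.zero_lt_one hm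
  have hmh : 0 < (m:ℝ)/2 := by linarith
  have hΓ : 0 < Real.Gamma ((m:ℝ)/2) := Real.Gamma_pos_of_pos hmh
  have hb : 0 < (m:ℝ)/2 * Real.Gamma ((m:ℝ)/2) := mul_pos hmh hΓ
  obtain ⟨a, ha_def⟩ : ∃ a : ℝ, a = 2 * ((m:ℝ)/2 * Real.Gamma ((m:ℝ)/2)) ^ (2/(m:ℝ)) := ⟨_, rfl⟩
  have ha : 0 < a := by
    rw [ha_def]
    have := Real.rpow_pos_of_pos hb (2/(m:ℝ))
    linarith
  have hΓ1 : Real.Gamma ((m:ℝ)/2 + 1) = (m:ℝ)/2 * Real.Gamma ((m:ℝ)/2) :=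
    Real.Gamma_add_one hmh.ne'
  have hΓ1pos : 0 < Real.Gamma ((m:ℝ)/2 + 1) := hΓ1 ▸ hb
  have hω : 0 < omegaBall m := by
    rw [omegaBall]
    exact div_pos (Real.rpow_pos_of_pos Real.pi_pos _) hΓ1pos
  obtain ⟨K, hK_def⟩ : ∃ K : ℝ,
      K = a ^ ((m:ℝ)/2) * Real.exp (-a) / Real.Gamma ((m:ℝ)/2 + 1) := ⟨_, rfl⟩
  have hK : 0 < K := by
    rw [hK_def]
    exact div_pos (mul_pos (Real.rpow_pos_of_pos ha _) (Real.exp_pos _)) hΓ1pos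
  obtain ⟨F, hF_def⟩ : ∃ F : ℝ → ℝ, F = fun t : ℝ =>
        ∫ y in (Metric.ball x
            (2 * (((m : ℝ) / 2) * Real.Gamma ((m : ℝ) / 2)) ^ (1 / (m : ℝ)) *
              t ^ ((1 : ℝ) / 2)))ᶜ,
          (2 * π * t) ^ (-(m : ℝ) / 2) * Real.exp (-(dist x y) ^ 2 / (2 * t)) ∂μ := ⟨_, rfl⟩
  rw [← hF_def]
  -- finiteness of ball measures
  have hfin : ∀ s : ℝ, μ (Metric.ball x s) ≠ ⊤ := by
    intro s
    by_contra h
    have hev : ∀ᶠ r : ℝ in atTop,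
        (μ (Metric.ball x r)).toReal / (omegaBall m * r ^ m) = 0 := by
      filter_upwards [eventually_ge_atTop s] with r hr
      have : μ (Metric.ball x r) = ⊤ :=
        eq_top_mono (measure_mono (Metric.ball_subset_ball hr)) h
      simp [this]
    have h0 : Tendsto (fun r : ℝ => (μ (Metric.ball x r)).toReal / (omegaBall m * r ^ m))
        atTop (nhds 0) := Tendsto.congr' (hev.mono fun r hr => hr.symm) tendsto_const_nhds
    have := tendsto_nhds_unique Qlim h0
    linarith
  -- upper bound on ball measures
  have hQle : ∀ s : ℝ, 0 < s → (μ (Metric.ball x s)).toReal ≤ E * (omegaBall m * s ^ m) := by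
    intro s hs
    have h1 : (μ (Metric.ball x s)).toReal / (omegaBall m * s ^ m) ≤ E := by
      apply ge_of_tendsto Qlim
      filter_upwards [eventually_ge_atTop s] with r hr
      exact Qmono s r hs hr
    have hpos : 0 < omegaBall m * s ^ m := mul_pos hω (pow_pos hs m)
    have h2 := mul_le_mul_of_nonneg_right h1 hpos.le
    rwa [div_mul_cancel₀ _ hpos.ne'] at h2
  -- main eventual bound
  have key : ∀ ε : ℝ, 0 < ε → ∀ᶠ t in atTop, F t ≤ E * Cm m + ε * K := by
    intro ε hε
    have hCm_eq : Cm m = incGamma ((m:ℝ)/2) a / Real.Gamma ((m:ℝ)/2) := by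
      rw [Cm, ← ha_def]
    have hCm0 : 0 ≤ Cm m := by
      rw [hCm_eq]; exact div_nonneg (incGamma_nonneg ha.le) hΓ.le
    have hRHS0 : 0 ≤ E * Cm m + ε * K := by
      have h1 : 0 ≤ E * Cm m := mul_nonneg hE.le hCm0
      have h2 : 0 < ε * K := mul_pos hε hK
      linarith
    -- choose S
    have hSex : ∀ᶠ s : ℝ in atTop,
        E - ε < (μ (Metric.ball x s)).toReal / (omegaBall m * s ^ m) :=
      Qlim.eventually (eventually_gt_nhds (by linarith))
    obtain ⟨S₀, hS₀⟩ := eventually_atTop.1 hSex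
    obtain ⟨S, hS_def⟩ : ∃ S : ℝ, S = max S₀ 1 := ⟨_, rfl⟩
    have hS1 : (1:ℝ) ≤ S := hS_def ▸ le_max_right _ _
    have hSlow : ∀ s : ℝ, S ≤ s →
        (E - ε) * (omegaBall m * s ^ m) ≤ (μ (Metric.ball x s)).toReal := by
      intro s hs
      have hs0 : 0 < s := lt_of_lt_of_le (lt_of_lt_of_le one_pos hS1) hs
      have h1 := hS₀ s (le_trans (hS_def ▸ le_max_left S₀ 1) hs)
      have hpos : 0 < omegaBall m * s ^ m := mul_pos hω (pow_pos hs0 m)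
      have h2 := mul_le_mul_of_nonneg_right h1.le hpos.le
      rwa [div_mul_cancel₀ _ hpos.ne'] at h2
    obtain ⟨B1, hB1_def⟩ : ∃ B1 : ℝ,
        B1 = 2 * (((m:ℝ)/2) * Real.Gamma ((m:ℝ)/2)) ^ (1/(m:ℝ)) := ⟨_, rfl⟩
    have hB1pos : 0 < B1 := by
      rw [hB1_def]
      have : 0 < ((m:ℝ)/2 * Real.Gamma ((m:ℝ)/2)) ^ (1/(m:ℝ)) := Real.rpow_pos_of_pos hb _
      linarith
    filter_upwards [eventually_ge_atTop (max 1 ((S / B1)^2))] with t ht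
    have ht1 : (1:ℝ) ≤ t := le_trans (le_max_left _ _) ht
    have ht0 : (0:ℝ) < t := lt_of_lt_of_le one_pos ht1
    have h2t : (0:ℝ) < 2 * t := by linarith
    rw [hF_def]
    simp only []
    rw [← hB1_def]
    obtain ⟨R, hR_def⟩ : ∃ R : ℝ, R = B1 * t ^ ((1:ℝ)/2) := ⟨_, rfl⟩
    rw [← hR_def]
    obtain ⟨c, hc_def⟩ : ∃ c : ℝ, c = (2 * π * t) ^ (-(m:ℝ)/2) := ⟨_, rfl⟩
    rw [← hc_def]
    have h2πt : (0:ℝ) < 2 * π * t := by have := Real.pi_pos; nlinarith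
    have hc : 0 < c := by rw [hc_def]; exact Real.rpow_pos_of_pos h2πt _
    have hRpos : 0 < R := by
      rw [hR_def]; exact mul_pos hB1pos (Real.rpow_pos_of_pos ht0 _)
    have hR2 : R ^ 2 = 2 * t * a := by
      have htpow : (t ^ ((1:ℝ)/2)) ^ 2 = t := by
        rw [sq, ← Real.rpow_add ht0]; norm_num
      have hbpow : ((((m:ℝ)/2) * Real.Gamma ((m:ℝ)/2)) ^ (1/(m:ℝ))) ^ 2
          = (((m:ℝ)/2) * Real.Gamma ((m:ℝ)/2)) ^ (2/(m:ℝ)) := by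
        rw [sq, ← Real.rpow_add hb]
        congr 1
        ring
      rw [hR_def, mul_pow, hB1_def, mul_pow, hbpow, htpow, ha_def]; ring
    have hRS : S ≤ R := by
      have hT2 : (S / B1) ^ 2 ≤ t := le_trans (le_max_right _ _) ht
      have h1 : ((S / B1) ^ 2) ^ ((1:ℝ)/2) ≤ t ^ ((1:ℝ)/2) :=
        Real.rpow_le_rpow (sq_nonneg _) hT2 (by norm_num)
      have hSB1 : 0 ≤ S / B1 := div_nonneg (by linarith) hB1pos.le
      have h2 : ((S / B1) ^ 2) ^ ((1:ℝ)/2) = S / B1 := by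
        rw [← Real.rpow_natCast (S / B1) 2, ← Real.rpow_mul hSB1]
        norm_num
      rw [h2] at h1
      have h3 := mul_le_mul_of_nonneg_left h1 hB1pos.le
      rw [mul_div_cancel₀ _ hB1pos.ne'] at h3
      rw [hR_def]; exact h3
    -- the integrand
    have hf_cont : Continuous fun y : X => c * Real.exp (-dist x y ^ 2 / (2 * t)) := by
      have h1 : Continuous fun y : X => dist x y := continuous_const.dist continuous_id
      exact continuous_const.mul (Real.continuous_exp.comp ((h1.pow 2).neg.div_const (2*t)))
    have hfmeas : Measurable fun y : X => c * Real.exp (-dist x y ^ 2 / (2 * t)) :=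
      hf_cont.measurable
    have hfnn : ∀ y : X, 0 ≤ c * Real.exp (-dist x y ^ 2 / (2 * t)) := fun y =>
      mul_nonneg hc.le (Real.exp_pos _).le
    -- log facts
    have hlog : ∀ l : ℝ, 0 < l → l < c * Real.exp (-a) → a < Real.log (c / l) := by
      intro l hl0 hl1
      have h1 : l * Real.exp a < c := by
        rw [Real.exp_neg, ← div_eq_mul_inv] at hl1
        exact (lt_div_iff₀ (Real.exp_pos a)).1 hl1
      have h2 : Real.exp a < c / l := (lt_div_iff₀ hl0).2 (by linarith [mul_comm l (Real.exp a)])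
      exact (Real.lt_log_iff_exp_lt (div_pos hc hl0)).2 h2
    have hrR : ∀ l : ℝ, 0 < l → l < c * Real.exp (-a) →
        R < Real.sqrt (2 * t * Real.log (c / l)) := by
      intro l hl0 hl1
      have h1 := hlog l hl0 hl1
      have h2 : R ^ 2 < Real.sqrt (2 * t * Real.log (c / l)) ^ 2 := by
        rw [hR2, Real.sq_sqrt (by nlinarith)]
        nlinarith
      exact lt_of_pow_lt_pow_left₀ 2 (Real.sqrt_nonneg _) h2
    -- the dominating function on the λ side
    obtain ⟨g, hg_def⟩ : ∃ g : ℝ → ℝ, g = fun l =>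
        E * (omegaBall m * Real.sqrt (2 * t * Real.log (c / l)) ^ m)
        - (E - ε) * (omegaBall m * R ^ m) := ⟨_, rfl⟩
    have hg_nonneg : ∀ l ∈ Set.Ioo (0:ℝ) (c * Real.exp (-a)), 0 ≤ g l := by
      intro l hl
      have h1 := hrR l hl.1 hl.2
      have h2 : R ^ m ≤ Real.sqrt (2 * t * Real.log (c / l)) ^ m :=
        pow_le_pow_left₀ hRpos.le h1.le m
      have h3 : 0 ≤ omegaBall m * R ^ m := mul_nonneg hω.le (pow_nonneg hRpos.le m)
      rw [hg_def]
      simp only []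
      have h4 : (E - ε) * (omegaBall m * R ^ m) ≤ E * (omegaBall m * R ^ m) := by nlinarith
      have h5 : E * (omegaBall m * R ^ m)
          ≤ E * (omegaBall m * Real.sqrt (2 * t * Real.log (c / l)) ^ m) :=
        mul_le_mul_of_nonneg_left (mul_le_mul_of_nonneg_left h2 hω.le) hE.le
      linarith
    -- measure bound for each level l
    have hstep : ∀ l : ℝ, l ∈ Set.Ioi (0:ℝ) →
        (μ.restrict (Metric.ball x R)ᶜ) {y : X | l < c * Real.exp (-dist x y ^ 2 / (2 * t))}
          ≤ Set.indicator (Set.Ioo (0:ℝ) (c * Real.exp (-a)))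
              (fun l => ENNReal.ofReal (g l)) l := by
      intro l hl
      have hl0 : (0:ℝ) < l := hl
      have hmeas_lt : MeasurableSet {y : X | l < c * Real.exp (-dist x y ^ 2 / (2 * t))} :=
        measurableSet_lt measurable_const hfmeas
      rw [Measure.restrict_apply hmeas_lt]
      by_cases hcase : l < c * Real.exp (-a)
      · rw [Set.indicator_of_mem (Set.mem_Ioo.mpr ⟨hl0, hcase⟩) (fun l => ENNReal.ofReal (g l))]
        obtain ⟨r, hr_def⟩ : ∃ r : ℝ, r = Real.sqrt (2 * t * Real.log (c / l)) := ⟨_, rfl⟩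
        have hRr : R < r := hr_def ▸ hrR l hl0 hcase
        have hrpos : 0 < r := lt_trans hRpos hRr
        have hsub1 : {y : X | l < c * Real.exp (-dist x y ^ 2 / (2 * t))}
            ⊆ Metric.ball x r := by
          intro y hy
          simp only [Set.mem_setOf_eq] at hy
          have hexp : Real.exp (-dist x y ^ 2 / (2 * t))
              * Real.exp (dist x y ^ 2 / (2 * t)) = 1 := by
            rw [← Real.exp_add, show -dist x y ^ 2 / (2 * t) + dist x y ^ 2 / (2 * t) = 0
              by ring, Real.exp_zero]
          have h1 : Real.exp (dist x y ^ 2 / (2 * t)) < c / l := by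
            rw [lt_div_iff₀ hl0]
            calc Real.exp (dist x y ^ 2 / (2 * t)) * l
                < Real.exp (dist x y ^ 2 / (2 * t)) * (c * Real.exp (-dist x y ^ 2 / (2 * t)))
                  := by exact mul_lt_mul_of_pos_left hy (Real.exp_pos _)
              _ = c := by nlinarith [hexp]
          have h2 : dist x y ^ 2 / (2 * t) < Real.log (c / l) :=
            (Real.lt_log_iff_exp_lt (div_pos hc hl0)).2 h1
          have h3 : dist x y ^ 2 < 2 * t * Real.log (c / l) := by
            have h4 := mul_lt_mul_of_pos_left h2 h2t
            calc dist x y ^ 2 = 2 * t * (dist x y ^ 2 / (2 * t)) := by field_simp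
            _ < 2 * t * Real.log (c / l) := h4
          rw [Metric.mem_ball, dist_comm, hr_def]
          exact (Real.lt_sqrt dist_nonneg).2 h3
        obtain ⟨T, hT_def⟩ : ∃ T : Set X,
            T = {y : X | l < c * Real.exp (-dist x y ^ 2 / (2 * t))}
              ∩ (Metric.ball x R)ᶜ := ⟨_, rfl⟩
        rw [← hT_def]
        have hdisj : Disjoint T (Metric.ball x R) := by
          rw [Set.disjoint_left]
          intro y hy hball
          rw [hT_def] at hy
          exact hy.2 hball
        have hunion : T ∪ Metric.ball x R ⊆ Metric.ball x r := by
          rw [hT_def]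
          exact Set.union_subset (Set.inter_subset_left.trans hsub1)
            (Metric.ball_subset_ball hRr.le)
        have h5 : μ T + μ (Metric.ball x R) ≤ μ (Metric.ball x r) := by
          rw [← measure_union hdisj measurableSet_ball]
          exact measure_mono hunion
        have hTfin : μ T ≠ ⊤ := by
          intro hT
          have h6 : (⊤:ENNReal) ≤ μ (Metric.ball x r) := by
            rw [hT] at h5
            simpa using h5
          exact hfin r (top_le_iff.1 h6)
        have h6 : (μ T).toReal + (μ (Metric.ball x R)).toReal
            ≤ (μ (Metric.ball x r)).toReal := by
          rw [← ENNReal.toReal_add hTfin (hfin R)]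
          exact ENNReal.toReal_mono (hfin r) h5
        have h7 := hQle r hrpos
        have h8 := hSlow R hRS
        have h9 : (μ T).toReal ≤ g l := by
          rw [hg_def]
          simp only []
          rw [← hr_def]
          linarith
        calc μ T = ENNReal.ofReal (μ T).toReal := (ENNReal.ofReal_toReal hTfin).symm
        _ ≤ ENNReal.ofReal (g l) := ENNReal.ofReal_le_ofReal h9
      · rw [Set.indicator_of_notMem (fun hmem => hcase hmem.2)]
        have hempty : {y : X | l < c * Real.exp (-dist x y ^ 2 / (2 * t))}
            ∩ (Metric.ball x R)ᶜ = ∅ := by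
          ext y
          simp only [Set.mem_inter_iff, Set.mem_setOf_eq, Set.mem_compl_iff,
            Metric.mem_ball, Set.mem_empty_iff_false, iff_false, not_and, not_not]
          intro hy1
          push_neg at hcase
          have h1 : c * Real.exp (-a) < c * Real.exp (-dist x y ^ 2 / (2 * t)) :=
            lt_of_le_of_lt hcase hy1
          have h2 : -a < -dist x y ^ 2 / (2 * t) :=
            Real.exp_lt_exp.1 ((mul_lt_mul_iff_right₀ hc).1 h1)
          have h3 : dist x y ^ 2 < R ^ 2 := by
            have h2' := mul_lt_mul_of_pos_left h2 h2t
            have e : 2 * t * (-dist x y ^ 2 / (2 * t)) = -dist x y ^ 2 := by field_simp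
            rw [hR2]
            rw [e] at h2'
            linarith
          have h4 : dist x y < R := lt_of_pow_lt_pow_left₀ 2 hRpos.le h3
          rw [dist_comm]; exact h4
        rw [hempty]
        simp
    -- substitution data
    have himg : (fun u : ℝ => c * Real.exp (-u)) '' Set.Ioi a
        = Set.Ioo 0 (c * Real.exp (-a)) := by
      ext l
      constructor
      · rintro ⟨u, hu, rfl⟩
        have hu' : a < u := hu
        exact ⟨mul_pos hc (Real.exp_pos _),
          mul_lt_mul_of_pos_left (Real.exp_lt_exp.2 (by linarith)) hc⟩
      · rintro ⟨hl0, hl1⟩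
        refine ⟨Real.log (c / l), hlog l hl0 hl1, ?_⟩
        simp only []
        rw [Real.exp_neg, Real.exp_log (div_pos hc hl0)]
        field_simp
    have hderiv : ∀ u ∈ Set.Ioi a, HasDerivWithinAt (fun u : ℝ => c * Real.exp (-u))
        (-(c * Real.exp (-u))) (Set.Ioi a) u := by
      intro u _
      have h1 : HasDerivAt (fun u : ℝ => c * Real.exp (-u)) (c * (Real.exp (-u) * (-1))) u :=
        (((hasDerivAt_id u).neg).exp).const_mul c
      have h2 : c * (Real.exp (-u) * (-1)) = -(c * Real.exp (-u)) := by ring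
      exact (h2 ▸ h1).hasDerivWithinAt
    have hinj : Set.InjOn (fun u : ℝ => c * Real.exp (-u)) (Set.Ioi a) := by
      intro u1 _ u2 _ h
      have h1 : Real.exp (-u1) = Real.exp (-u2) := mul_left_cancel₀ hc.ne' h
      have h2 := Real.exp_eq_exp.1 h1
      linarith
    have hRm : R ^ m = (2*t*a) ^ ((m:ℝ)/2) := by
      have h2 : ((R:ℝ)^2) ^ ((m:ℝ)/2) = R ^ m := by
        rw [← Real.rpow_natCast R 2, ← Real.rpow_mul hRpos.le, ← Real.rpow_natCast R m]
        congr 1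
        push_cast
        ring
      rw [← h2, hR2]
    have hcomp : Set.EqOn (fun l : ℝ => |(-(c * Real.exp (-l)))| • g (c * Real.exp (-l)))
        (fun u : ℝ => (c * Real.exp (-u)) * (E * (omegaBall m * (2*t*u) ^ ((m:ℝ)/2))
          - (E - ε) * (omegaBall m * (2*t*a) ^ ((m:ℝ)/2)))) (Set.Ioi a) := by
      intro u hu
      have hu' : a < u := hu
      have hu0 : 0 < u := lt_trans ha hu'
      simp only [hg_def, smul_eq_mul]
      have e1 : c / (c * Real.exp (-u)) = Real.exp u := by
        rw [Real.exp_neg]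
        field_simp
      have e2 : Real.sqrt (2 * t * Real.log (c / (c * Real.exp (-u)))) ^ m
          = (2*t*u) ^ ((m:ℝ)/2) := by
        rw [e1, Real.log_exp, Real.sqrt_eq_rpow, ← Real.rpow_natCast _ m,
          ← Real.rpow_mul (mul_nonneg h2t.le hu0.le)]
        congr 1
        push_cast
        ring
      rw [e2, hRm, abs_neg, abs_of_pos (mul_pos hc (Real.exp_pos _))]
    -- integrability and value on the u side
    have hA : IntegrableOn (fun u : ℝ => c * E * omegaBall m * (2*t) ^ ((m:ℝ)/2)
        * (u ^ ((m:ℝ)/2 + 1 - 1) * Real.exp (-u))) (Set.Ioi a) :=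
      (integrableOn_gamma_integrand (by linarith : (0:ℝ) < (m:ℝ)/2 + 1) ha.le).const_mul _
    have hB : IntegrableOn (fun u : ℝ => c * (E - ε) * (omegaBall m * (2*t*a) ^ ((m:ℝ)/2))
        * Real.exp (-u)) (Set.Ioi a) := by
      have h1 : IntegrableOn (fun u : ℝ => Real.exp (-u)) (Set.Ioi a) := by
        simpa using exp_neg_integrableOn_Ioi a one_pos
      exact h1.const_mul _
    have hEq : Set.EqOn (fun u : ℝ => (c * Real.exp (-u))
          * (E * (omegaBall m * (2*t*u) ^ ((m:ℝ)/2))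
            - (E - ε) * (omegaBall m * (2*t*a) ^ ((m:ℝ)/2))))
        (fun u : ℝ => c * E * omegaBall m * (2*t) ^ ((m:ℝ)/2)
            * (u ^ ((m:ℝ)/2 + 1 - 1) * Real.exp (-u))
          - c * (E - ε) * (omegaBall m * (2*t*a) ^ ((m:ℝ)/2)) * Real.exp (-u))
        (Set.Ioi a) := by
      intro u hu
      have hu0 : 0 < u := lt_trans ha hu
      have e3 : (2*t*u : ℝ) ^ ((m:ℝ)/2) = (2*t) ^ ((m:ℝ)/2) * u ^ ((m:ℝ)/2) :=
        Real.mul_rpow h2t.le hu0.le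
      have e4 : (m:ℝ)/2 + 1 - 1 = (m:ℝ)/2 := by ring
      simp only [e4, e3]
      ring
    have hint_u : IntegrableOn (fun u : ℝ => (c * Real.exp (-u))
        * (E * (omegaBall m * (2*t*u) ^ ((m:ℝ)/2))
          - (E - ε) * (omegaBall m * (2*t*a) ^ ((m:ℝ)/2)))) (Set.Ioi a) :=
      IntegrableOn.congr_fun (hA.sub hB) (fun u hu => (hEq hu).symm) measurableSet_Ioi
    have hval : (∫ u in Set.Ioi a, (c * Real.exp (-u))
        * (E * (omegaBall m * (2*t*u) ^ ((m:ℝ)/2))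
          - (E - ε) * (omegaBall m * (2*t*a) ^ ((m:ℝ)/2))))
        = E * Cm m + ε * K := by
      rw [setIntegral_congr_fun measurableSet_Ioi hEq, integral_sub hA hB,
        integral_const_mul, integral_const_mul, integral_exp_neg_Ioi]
      rw [show (∫ u in Set.Ioi a, u ^ ((m:ℝ)/2 + 1 - 1) * Real.exp (-u))
        = incGamma ((m:ℝ)/2 + 1) a from rfl]
      rw [incGamma_succ hmh ha]
      have hsplit : (2*t*a : ℝ) ^ ((m:ℝ)/2) = (2*t) ^ ((m:ℝ)/2) * a ^ ((m:ℝ)/2) :=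
        Real.mul_rpow h2t.le ha.le
      have hX : c * (2*t) ^ ((m:ℝ)/2) * omegaBall m = 1 / Real.Gamma ((m:ℝ)/2 + 1) := by
        rw [hc_def, omegaBall, show (2*π*t : ℝ) = (2*t)*π by ring,
          Real.mul_rpow h2t.le Real.pi_pos.le,
          show -(m:ℝ)/2 = -((m:ℝ)/2) by ring,
          Real.rpow_neg h2t.le, Real.rpow_neg Real.pi_pos.le]
        have h2tne : (2*t:ℝ) ^ ((m:ℝ)/2) ≠ 0 := (Real.rpow_pos_of_pos h2t _).ne'
        have hπne : (π:ℝ) ^ ((m:ℝ)/2) ≠ 0 := (Real.rpow_pos_of_pos Real.pi_pos _).ne'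
        field_simp
      rw [hsplit, hCm_eq, hK_def]
      calc c * E * omegaBall m * (2*t) ^ ((m:ℝ)/2)
            * ((m:ℝ)/2 * incGamma ((m:ℝ)/2) a + a ^ ((m:ℝ)/2) * Real.exp (-a))
          - c * (E - ε) * (omegaBall m * ((2*t) ^ ((m:ℝ)/2) * a ^ ((m:ℝ)/2))) * Real.exp (-a)
          = (c * (2*t) ^ ((m:ℝ)/2) * omegaBall m)
            * (E * ((m:ℝ)/2 * incGamma ((m:ℝ)/2) a)
              + ε * (a ^ ((m:ℝ)/2) * Real.exp (-a))) := by ring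
      _ = (1 / Real.Gamma ((m:ℝ)/2 + 1))
            * (E * ((m:ℝ)/2 * incGamma ((m:ℝ)/2) a)
              + ε * (a ^ ((m:ℝ)/2) * Real.exp (-a))) := by rw [hX]
      _ = E * (incGamma ((m:ℝ)/2) a / Real.Gamma ((m:ℝ)/2))
            + ε * (a ^ ((m:ℝ)/2) * Real.exp (-a) / Real.Gamma ((m:ℝ)/2 + 1)) := by
          rw [hΓ1]
          field_simp
    -- integrability of g on the image interval
    have hg_int : IntegrableOn g (Set.Ioo 0 (c * Real.exp (-a))) := by
      rw [← himg, integrableOn_image_iff_integrableOn_abs_deriv_smul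
        measurableSet_Ioi hderiv hinj]
      exact hint_u.congr_fun (fun u hu => (hcomp hu).symm) measurableSet_Ioi
    -- the main lintegral bound
    have hL : (∫⁻ y in (Metric.ball x R)ᶜ,
          ENNReal.ofReal (c * Real.exp (-dist x y ^ 2 / (2 * t))) ∂μ)
        ≤ ENNReal.ofReal (E * Cm m + ε * K) := by
      rw [lintegral_eq_lintegral_meas_lt (μ.restrict (Metric.ball x R)ᶜ)
        (Eventually.of_forall hfnn) hfmeas.aemeasurable]
      have step1 : (∫⁻ l in Set.Ioi (0:ℝ),
            (μ.restrict (Metric.ball x R)ᶜ)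
              {y : X | l < c * Real.exp (-dist x y ^ 2 / (2 * t))})
          ≤ ∫⁻ l in Set.Ioi (0:ℝ), Set.indicator (Set.Ioo (0:ℝ) (c * Real.exp (-a)))
              (fun l => ENNReal.ofReal (g l)) l := by
        refine lintegral_mono_ae ?_
        filter_upwards [ae_restrict_mem measurableSet_Ioi] with l hl
        exact hstep l hl
      refine le_trans step1 ?_
      rw [lintegral_indicator measurableSet_Ioo, Measure.restrict_restrict measurableSet_Ioo,
        Set.inter_eq_self_of_subset_left Set.Ioo_subset_Ioi_self]
      have hofReal : (∫⁻ l in Set.Ioo (0:ℝ) (c * Real.exp (-a)), ENNReal.ofReal (g l))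
          = ENNReal.ofReal (∫ l in Set.Ioo (0:ℝ) (c * Real.exp (-a)), g l) :=
        (ofReal_integral_eq_lintegral_ofReal hg_int
          ((ae_restrict_iff' measurableSet_Ioo).2 (Eventually.of_forall hg_nonneg))).symm
      rw [hofReal]
      have hsubst : (∫ l in Set.Ioo (0:ℝ) (c * Real.exp (-a)), g l)
          = ∫ u in Set.Ioi a, (c * Real.exp (-u))
            * (E * (omegaBall m * (2*t*u) ^ ((m:ℝ)/2))
              - (E - ε) * (omegaBall m * (2*t*a) ^ ((m:ℝ)/2))) := by
        rw [← himg, integral_image_eq_integral_abs_deriv_smul measurableSet_Ioi hderiv hinj g]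
        exact setIntegral_congr_fun measurableSet_Ioi hcomp
      rw [hsubst, hval]
    -- conclude for this t
    rw [integral_eq_lintegral_of_nonneg_ae (Eventually.of_forall hfnn)
      hf_cont.aestronglyMeasurable.restrict]
    exact ENNReal.toReal_le_of_le_ofReal hRHS0 hL
  -- conclusion
  have hlim : ∀ ε : ℝ, 0 < ε → limsup F atTop ≤ E * Cm m + ε * K := by
    intro ε hε
    have hF0 : ∀ᶠ t : ℝ in atTop, 0 ≤ F t := by
      filter_upwards [eventually_gt_atTop (0:ℝ)] with t ht
      rw [hF_def]
      refine integral_nonneg fun y => ?_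
      have h2t : (0:ℝ) < 2 * π * t := by
        have := Real.pi_pos; nlinarith
      exact mul_nonneg (Real.rpow_nonneg h2t.le _) (Real.exp_pos _).le
    exact limsup_le_of_le (isCoboundedUnder_le_of_eventually_le atTop hF0) (key ε hε)
  refine le_of_forall_pos_le_add fun ε hε => ?_
  have h := hlim (ε / K) (by positivity)
  calc limsup F atTop ≤ E * Cm m + ε / K * K := h
  _ = E * Cm m + ε := by rw [div_mul_cancel₀ _ hK.ne']
end

section
/- Let (X,d) be a metric space equipped with a Borel measure μ, let m ≥ 1 be an integer, let C > 0, and fix x ∈ X. Assume μ(B_s(x)) ≤ C·s^m for every s > 0. Then for every t > 0 and every R ≥ 0, ∫_{{y ∈ X : d(x,y) ≥ R}} exp(-d(x,y)²/(2t)) dμ(y) ≤ C·(2t)^{m/2}·Γ(m/2 + 1, R²/(2t)), where Γ(a,x) := ∫_x^∞ u^{a-1} e^{-u} du is the upper incomplete Gamma function. -/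
open MeasureTheory Real Filter Set

theorem gaussian_tail_estimate {X : Type*} [MetricSpace X] [MeasurableSpace X] [BorelSpace X]
    (μ : Measure X) (m : ℕ) (hm : 1 ≤ m) (C : ℝ) (hC : 0 < C) (x : X)
    (hvol : ∀ s : ℝ, 0 < s → μ (Metric.ball x s) ≤ ENNReal.ofReal (C * s ^ m)) :
    ∀ t : ℝ, 0 < t → ∀ R : ℝ, 0 ≤ R →
      ∫ y in {y : X | R ≤ dist x y}, Real.exp (-(dist x y) ^ 2 / (2 * t)) ∂μ ≤
        C * (2 * t) ^ ((m : ℝ) / 2) * incGamma ((m : ℝ) / 2 + 1) (R ^ 2 / (2 * t)) := by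
  intro t ht R hR
  have h2t : (0:ℝ) < 2 * t := by linarith
  set v0 : ℝ := R ^ 2 / (2 * t) with hv0def
  have hv0 : 0 ≤ v0 := div_nonneg (sq_nonneg R) h2t.le
  set A : Set X := {y : X | R ≤ dist x y} with hAdef
  set g : X → ℝ := fun y => (dist x y) ^ 2 / (2 * t) with hgdef
  have hdist : Measurable fun y : X => dist x y :=
    (continuous_const.dist continuous_id).measurable
  have hgmeas : Measurable g := (hdist.pow_const 2).div_const _
  have hA : MeasurableSet A := measurableSet_le measurable_const hdist
  haveI hsf : SigmaFinite μ := by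
    refine ⟨⟨⟨fun n => Metric.ball x (n + 1), fun _ => trivial, fun n => ?_, ?_⟩⟩⟩
    · exact lt_of_le_of_lt (hvol _ (by positivity)) ENNReal.ofReal_lt_top
    · refine Set.eq_univ_of_forall fun y => ?_
      obtain ⟨n, hn⟩ := exists_nat_gt (dist y x)
      exact Set.mem_iUnion.mpr ⟨n, Metric.mem_ball.mpr (by linarith)⟩
  have expInt : ∀ v : ℝ, ∫⁻ u in Ioi v, ENNReal.ofReal (Real.exp (-u))
      = ENNReal.ofReal (Real.exp (-v)) := fun v => by
    rw [← ofReal_integral_eq_lintegral_ofReal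
      ((exp_neg_integrableOn_Ioi v one_pos).congr_fun (fun u _ => by simp) measurableSet_Ioi)
      (Filter.Eventually.of_forall fun u => (Real.exp_pos _).le), integral_exp_neg_Ioi]
  set F : X → ℝ → ENNReal := fun y u =>
    if g y < u then ENNReal.ofReal (Real.exp (-u)) else 0 with hFdef
  have hFmeas : AEMeasurable (Function.uncurry F)
      ((μ.restrict A).prod (volume.restrict (Ioi v0))) := by
    apply Measurable.aemeasurable
    apply Measurable.ite
    · exact measurableSet_lt (hgmeas.comp measurable_fst) measurable_snd
    · exact (Real.measurable_exp.comp measurable_snd.neg).ennreal_ofReal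
    · exact measurable_const
  have hgv0 : ∀ y ∈ A, v0 ≤ g y := by
    intro y hy
    exact div_le_div_of_nonneg_right (pow_le_pow_left₀ hR hy 2) h2t.le
  have step1 : ∀ y ∈ A, ENNReal.ofReal (Real.exp (-(g y))) = ∫⁻ u in Ioi v0, F y u := by
    intro y hy
    have h1 : ∀ u, F y u
        = (Ioi (g y)).indicator (fun u => ENNReal.ofReal (Real.exp (-u))) u := fun u => by
      simp [hFdef, Set.indicator_apply, mem_Ioi]
    rw [← expInt (g y)]
    simp_rw [h1]
    rw [lintegral_indicator measurableSet_Ioi, Measure.restrict_restrict measurableSet_Ioi,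
      Set.inter_eq_self_of_subset_left (Ioi_subset_Ioi (hgv0 y hy))]
  have hmeaslt : ∀ u : ℝ, MeasurableSet {y : X | g y < u} := fun u =>
    measurableSet_lt hgmeas measurable_const
  have hGint : IntegrableOn (fun u : ℝ => u ^ ((m:ℝ)/2) * Real.exp (-u)) (Ioi v0) volume := by
    have h := (Real.GammaIntegral_convergent (s := (m:ℝ)/2 + 1) (by positivity)).mono_set
      (Ioi_subset_Ioi hv0)
    exact h.congr_fun (fun u hu => by rw [add_sub_cancel_right, mul_comm]) measurableSet_Ioi
  have key : ∫⁻ y in A, ENNReal.ofReal (Real.exp (-(g y))) ∂μ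
      ≤ ENNReal.ofReal (C * (2*t) ^ ((m:ℝ)/2) * incGamma ((m:ℝ)/2 + 1) v0) := by
    calc ∫⁻ y in A, ENNReal.ofReal (Real.exp (-(g y))) ∂μ
        = ∫⁻ y in A, (∫⁻ u in Ioi v0, F y u) ∂μ :=
          setLIntegral_congr_fun hA step1
      _ = ∫⁻ u in Ioi v0, ∫⁻ y in A, F y u ∂μ := lintegral_lintegral_swap hFmeas
      _ ≤ ∫⁻ u in Ioi v0, ENNReal.ofReal (Real.exp (-u))
            * ENNReal.ofReal (C * (2*t) ^ ((m:ℝ)/2) * u ^ ((m:ℝ)/2)) := by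
          refine lintegral_mono_ae ((ae_restrict_iff' measurableSet_Ioi).mpr
            (Filter.Eventually.of_forall fun u hu => ?_))
          have hu0 : 0 < u := lt_of_le_of_lt hv0 hu
          have hsub : {y : X | g y < u} ∩ A ⊆ Metric.ball x (Real.sqrt (2*t*u)) := by
            rintro y ⟨hy1, -⟩
            rw [Metric.mem_ball, dist_comm]
            refine (Real.lt_sqrt dist_nonneg).mpr ?_
            have : g y < u := hy1
            rw [hgdef] at this
            calc dist x y ^ 2 = (dist x y ^ 2 / (2*t)) * (2*t) := by field_simp
              _ < u * (2*t) := by exact mul_lt_mul_of_pos_right this h2t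
              _ = 2*t*u := by ring
          have hpow : Real.sqrt (2*t*u) ^ m = (2*t) ^ ((m:ℝ)/2) * u ^ ((m:ℝ)/2) := by
            rw [Real.sqrt_eq_rpow, ← Real.rpow_natCast ((2*t*u) ^ ((1:ℝ)/2)) m,
              ← Real.rpow_mul (by positivity), show (1:ℝ)/2 * (m:ℕ) = (m:ℝ)/2 by ring,
              Real.mul_rpow h2t.le hu0.le]
          have hF : ∀ y : X, F y u
              = ({y : X | g y < u}).indicator (fun _ => ENNReal.ofReal (Real.exp (-u))) y :=
            fun y => by simp [hFdef, Set.indicator_apply]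
          calc ∫⁻ y in A, F y u ∂μ
              = ENNReal.ofReal (Real.exp (-u)) * μ ({y : X | g y < u} ∩ A) := by
                simp_rw [hF]
                rw [lintegral_indicator (hmeaslt u), setLIntegral_const,
                  Measure.restrict_apply (hmeaslt u)]
            _ ≤ ENNReal.ofReal (Real.exp (-u))
                  * ENNReal.ofReal (C * (2*t) ^ ((m:ℝ)/2) * u ^ ((m:ℝ)/2)) := by
                refine mul_le_mul_right ?_ _
                calc μ ({y : X | g y < u} ∩ A)
                    ≤ μ (Metric.ball x (Real.sqrt (2*t*u))) := measure_mono hsub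
                  _ ≤ ENNReal.ofReal (C * Real.sqrt (2*t*u) ^ m) :=
                      hvol _ (Real.sqrt_pos.mpr (by positivity))
                  _ = ENNReal.ofReal (C * (2*t) ^ ((m:ℝ)/2) * u ^ ((m:ℝ)/2)) := by
                      rw [hpow, mul_assoc]
      _ = ∫⁻ u in Ioi v0,
            ENNReal.ofReal ((C * (2*t) ^ ((m:ℝ)/2)) * (u ^ ((m:ℝ)/2) * Real.exp (-u))) := by
          refine setLIntegral_congr_fun measurableSet_Ioi
            (fun u hu => ?_)
          rw [← ENNReal.ofReal_mul (Real.exp_pos _).le]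
          congr 1
          ring
      _ = ENNReal.ofReal (∫ u in Ioi v0,
            (C * (2*t) ^ ((m:ℝ)/2)) * (u ^ ((m:ℝ)/2) * Real.exp (-u))) := by
          refine (ofReal_integral_eq_lintegral_ofReal (hGint.const_mul _)
            ((ae_restrict_iff' measurableSet_Ioi).mpr
              (Filter.Eventually.of_forall fun u hu => ?_))).symm
          have hu0 : (0:ℝ) ≤ u := hv0.trans (le_of_lt hu)
          exact mul_nonneg (mul_nonneg hC.le (Real.rpow_nonneg h2t.le _))
            (mul_nonneg (Real.rpow_nonneg hu0 _) (Real.exp_pos _).le)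
      _ = ENNReal.ofReal (C * (2*t) ^ ((m:ℝ)/2) * incGamma ((m:ℝ)/2 + 1) v0) := by
          rw [integral_const_mul, incGamma]
          simp only [add_sub_cancel_right, mul_assoc]
  have hinc : 0 ≤ incGamma ((m:ℝ)/2 + 1) v0 := by
    rw [incGamma]
    refine setIntegral_nonneg measurableSet_Ioi fun u hu => ?_
    exact mul_nonneg (Real.rpow_nonneg (hv0.trans (le_of_lt hu)) _) (Real.exp_pos _).le
  have hfnn : (0:X → ℝ) ≤ᵐ[μ.restrict A] fun y => Real.exp (-(dist x y) ^ 2 / (2 * t)) :=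
    Filter.Eventually.of_forall fun y => (Real.exp_pos _).le
  have hfmeas : AEStronglyMeasurable (fun y : X => Real.exp (-(dist x y) ^ 2 / (2 * t)))
      (μ.restrict A) :=
    (Real.continuous_exp.comp
      (((continuous_const.dist continuous_id).pow 2).neg.div_const _)).aestronglyMeasurable
  rw [integral_eq_lintegral_of_nonneg_ae hfnn hfmeas]
  refine ENNReal.toReal_le_of_le_ofReal
    (mul_nonneg (mul_nonneg hC.le (Real.rpow_nonneg h2t.le _)) hinc) ?_
  have : ∀ y : X, -(dist x y) ^ 2 / (2 * t) = -(g y) := fun y => by rw [hgdef, neg_div]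
  simp_rw [this]
  exact key
end

section
/- Let (X,d) be a metric space equipped with a Borel measure μ, let m ≥ 1 be an integer, let E > 0, and fix x ∈ X. Let H : (0,∞) × X × X → [0,∞) be a measurable kernel that is symmetric in the space variables, satisfies the semigroup identity H(t+s,x,y) = ∫_X H(t,x,z)·H(s,z,y) dμ(z), is stochastically complete (∫_X H(t,z,y) dμ(y) = 1 for all t > 0 and z ∈ X), and satisfies the Markvorsen bound of dimension m: H(t,z,y) ≤ (4πt)^{-m/2}·exp(-d(z,y)²/(4t)) for all t > 0 and z,y ∈ X. Assume μ(B_s(x)) ≤ E·ω_m·s^m for every s > 0. Then for every t > 0, setting R_t := 2·((m/2)·Γ(m/2))^{1/m}·t^{1/2}, one has (4πt)^{m/2}·H(t,x,x) ≥ (1 − ∫_{X∖B_{R_t}(x)} H(t/2,x,y) dμ(y))² / E. -/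
open MeasureTheory Real Filter Set

/-- Cauchy–Schwarz on a set of finite measure. -/
lemma cauchy_schwarz_set {X : Type*} [MeasurableSpace X] (μ : Measure X) {B : Set X}
    (hμB : μ B ≠ ⊤) {f : X → ℝ} (hmeas : Measurable f) (hnonneg : ∀ y, 0 ≤ f y)
    (hsq : Integrable (fun y => f y ^ 2) (μ.restrict B)) :
    (∫ y in B, f y ∂μ) ^ 2 ≤ (μ B).toReal * ∫ y in B, f y ^ 2 ∂μ := by
  haveI : IsFiniteMeasure (μ.restrict B) :=
    ⟨by rw [Measure.restrict_apply_univ]; exact hμB.lt_top⟩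
  have h22 : (2 : ℝ).HolderConjugate 2 := Real.HolderConjugate.two_two
  have hfmem : MemLp f (ENNReal.ofReal 2) (μ.restrict B) := by
    rw [show ENNReal.ofReal 2 = 2 by norm_num]
    exact (memLp_two_iff_integrable_sq hmeas.aestronglyMeasurable.restrict).2 hsq
  have hgmem : MemLp (fun _ : X => (1 : ℝ)) (ENNReal.ofReal 2) (μ.restrict B) :=
    memLp_const 1
  have key := integral_mul_le_Lp_mul_Lq_of_nonneg h22
    (Filter.Eventually.of_forall hnonneg) (Filter.Eventually.of_forall fun _ => zero_le_one)
    hfmem hgmem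
  have e1 : ∀ x : ℝ, x ^ (2:ℝ) = x ^ 2 := fun x => by
    rw [show (2:ℝ) = ((2:ℕ):ℝ) by norm_num, Real.rpow_natCast]
  simp only [mul_one, e1, one_pow] at key
  have hone : (∫ _ in B, (1 : ℝ) ∂μ) = (μ B).toReal := by
    simp [Measure.restrict_apply_univ, Measure.real]
  rw [hone] at key
  have h1 : (0 : ℝ) ≤ ∫ y in B, f y ^ 2 ∂μ :=
    integral_nonneg fun y => sq_nonneg _
  have h2 : (0 : ℝ) ≤ (μ B).toReal := ENNReal.toReal_nonneg
  have h3 : (0 : ℝ) ≤ ∫ y in B, f y ∂μ := integral_nonneg hnonneg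
  calc (∫ y in B, f y ∂μ) ^ 2
      ≤ ((∫ y in B, f y ^ 2 ∂μ) ^ ((1 : ℝ)/2) * (μ B).toReal ^ ((1 : ℝ)/2)) ^ 2 := by
        apply pow_le_pow_left₀ h3 key
    _ = (μ B).toReal * ∫ y in B, f y ^ 2 ∂μ := by
        rw [mul_pow, ← Real.rpow_natCast ((∫ y in B, f y ^ 2 ∂μ) ^ ((1:ℝ)/2)) 2,
          ← Real.rpow_natCast ((μ B).toReal ^ ((1:ℝ)/2)) 2,
          ← Real.rpow_mul h1, ← Real.rpow_mul h2]
        norm_num [mul_comm]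

/-- The radius is chosen so that `ω_m R_t^m = (4πt)^{m/2}`. -/
lemma omega_radius (m : ℕ) (hm : 1 ≤ m) (t : ℝ) (ht : 0 < t) :
    omegaBall m *
      (2 * (((m : ℝ) / 2) * Real.Gamma ((m : ℝ) / 2)) ^ (1 / (m : ℝ)) *
        t ^ ((1 : ℝ) / 2)) ^ m = (4 * π * t) ^ ((m : ℝ) / 2) := by
  have hm0 : (0 : ℝ) < m := by exact_mod_cast hm
  set a : ℝ := ((m : ℝ) / 2) * Real.Gamma ((m : ℝ) / 2) with ha_def
  have ha : 0 < a := mul_pos (by positivity) (Real.Gamma_pos_of_pos (by positivity))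
  have hΓ : Real.Gamma ((m : ℝ) / 2 + 1) = a := by
    rw [Real.Gamma_add_one (by positivity)]
  have h1 : ((a ^ ((1 : ℝ) / (m : ℝ))) : ℝ) ^ m = a := by
    rw [← Real.rpow_natCast (a ^ ((1:ℝ)/(m:ℝ))) m, ← Real.rpow_mul ha.le,
      one_div_mul_cancel (ne_of_gt hm0), Real.rpow_one]
  have h2 : (t ^ ((1 : ℝ) / 2)) ^ m = t ^ ((m : ℝ) / 2) := by
    rw [← Real.rpow_natCast (t ^ ((1:ℝ)/2)) m, ← Real.rpow_mul ht.le, one_div,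
      inv_mul_eq_div]
  have h3 : (4 * π * t) ^ ((m : ℝ) / 2) =
      (2 : ℝ) ^ m * π ^ ((m : ℝ) / 2) * t ^ ((m : ℝ) / 2) := by
    rw [Real.mul_rpow (by positivity) ht.le, Real.mul_rpow (by positivity) Real.pi_pos.le]
    congr 1
    rw [show (4 : ℝ) = (2 : ℝ) ^ (2 : ℝ) by norm_num [Real.rpow_natCast],
      ← Real.rpow_natCast (2 : ℝ) m, ← Real.rpow_mul (by norm_num : (0:ℝ) ≤ 2)]
    ring_nf
  rw [omegaBall, hΓ, mul_pow, mul_pow, h1, h2, h3]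
  field_simp

theorem prelimit_inequality {X : Type*} [MetricSpace X] [MeasurableSpace X] [BorelSpace X]
    (μ : Measure X) (m : ℕ) (hm : 1 ≤ m) (E : ℝ) (hE : 0 < E) (x : X)
    (H : ℝ → X → X → ℝ)
    (Hmeas : ∀ t : ℝ, 0 < t → Measurable (Function.uncurry (H t)))
    (Hnonneg : ∀ t : ℝ, 0 < t → ∀ z y : X, 0 ≤ H t z y)
    (Hsymm : ∀ t : ℝ, 0 < t → ∀ z y : X, H t z y = H t y z)
    (Hsemigroup : ∀ t s : ℝ, 0 < t → 0 < s → ∀ z y : X,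
      H (t + s) z y = ∫ w, H t z w * H s w y ∂μ)
    (Hstoch : ∀ t : ℝ, 0 < t → ∀ z : X, ∫ y, H t z y ∂μ = 1)
    (Hmark : ∀ t : ℝ, 0 < t → ∀ z y : X,
      H t z y ≤ (4 * π * t) ^ (-(m : ℝ) / 2) * Real.exp (-(dist z y) ^ 2 / (4 * t)))
    (hvol : ∀ s : ℝ, 0 < s → μ (Metric.ball x s) ≤ ENNReal.ofReal (E * omegaBall m * s ^ m)) :
    ∀ t : ℝ, 0 < t →
      (1 - ∫ y in (Metric.ball x
            (2 * (((m : ℝ) / 2) * Real.Gamma ((m : ℝ) / 2)) ^ (1 / (m : ℝ)) *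
              t ^ ((1 : ℝ) / 2)))ᶜ,
          H (t / 2) x y ∂μ) ^ 2 / E ≤
        (4 * π * t) ^ ((m : ℝ) / 2) * H t x x := by
  intro t ht
  set s : ℝ := t / 2 with hs_def
  have hs : 0 < s := by positivity
  set R : ℝ := 2 * (((m : ℝ) / 2) * Real.Gamma ((m : ℝ) / 2)) ^ (1 / (m : ℝ)) *
      t ^ ((1 : ℝ) / 2) with hR_def
  have hm0 : (0 : ℝ) < m := by exact_mod_cast hm
  have ha : 0 < ((m : ℝ) / 2) * Real.Gamma ((m : ℝ) / 2) :=
    mul_pos (by positivity) (Real.Gamma_pos_of_pos (by positivity))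
  have hR : 0 < R := by
    have := Real.rpow_pos_of_pos ha (1 / (m : ℝ))
    have := Real.rpow_pos_of_pos ht ((1 : ℝ) / 2)
    positivity
  set B : Set X := Metric.ball x R with hB_def
  set f : X → ℝ := H s x with hf_def
  have hfm : Measurable f := (Hmeas s hs).comp measurable_prodMk_left
  have hf_nonneg : ∀ y, 0 ≤ f y := fun y => Hnonneg s hs x y
  have hstoch := Hstoch s hs x
  have hf_int : Integrable f μ := by
    by_contra h
    rw [integral_undef h] at hstoch
    norm_num at hstoch
  set C : ℝ := (4 * π * s) ^ (-(m : ℝ) / 2) with hC_def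
  have hC : 0 < C := Real.rpow_pos_of_pos (by positivity) _
  have hfC : ∀ y, f y ≤ C := by
    intro y
    refine (Hmark s hs x y).trans ?_
    have : Real.exp (-(dist x y) ^ 2 / (4 * s)) ≤ 1 := by
      rw [Real.exp_le_one_iff]
      apply div_nonpos_of_nonpos_of_nonneg
      · simpa using sq_nonneg (dist x y)
      · positivity
    calc (4 * π * s) ^ (-(m : ℝ) / 2) * Real.exp (-(dist x y) ^ 2 / (4 * s))
        ≤ (4 * π * s) ^ (-(m : ℝ) / 2) * 1 := by
          exact mul_le_mul_of_nonneg_left this hC.le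
      _ = C := by rw [mul_one]
  have hsq_int : Integrable (fun y => f y ^ 2) μ := by
    refine (hf_int.const_mul C).mono ((hfm.pow_const 2).aestronglyMeasurable) ?_
    filter_upwards with y
    rw [Real.norm_eq_abs, Real.norm_eq_abs, abs_of_nonneg (sq_nonneg _),
      abs_of_nonneg (mul_nonneg hC.le (hf_nonneg y))]
    nlinarith [hf_nonneg y, hfC y]
  have hHt : H t x x = ∫ y, f y ^ 2 ∂μ := by
    have hsg := Hsemigroup s s hs hs x x
    rw [show s + s = t by rw [hs_def]; ring] at hsg
    rw [hsg]
    refine integral_congr_ae (Filter.Eventually.of_forall fun y => ?_)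
    show H s x y * H s y x = f y ^ 2
    rw [Hsymm s hs y x, hf_def]
    ring
  have hμB_fin : μ B ≠ ⊤ :=
    ((hvol R hR).trans_lt ENNReal.ofReal_lt_top).ne
  have hωpos : 0 < omegaBall m := by
    rw [omegaBall]
    exact div_pos (Real.rpow_pos_of_pos Real.pi_pos _)
      (Real.Gamma_pos_of_pos (by positivity))
  have hμB_le : (μ B).toReal ≤ E * (4 * π * t) ^ ((m : ℝ) / 2) := by
    have h1 : (μ B).toReal ≤ E * omegaBall m * R ^ m := by
      have := ENNReal.toReal_mono ENNReal.ofReal_ne_top (hvol R hR)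
      rwa [ENNReal.toReal_ofReal (by positivity)] at this
    calc (μ B).toReal ≤ E * omegaBall m * R ^ m := h1
      _ = E * (omegaBall m * R ^ m) := by ring
      _ = E * (4 * π * t) ^ ((m : ℝ) / 2) := by
          rw [omega_radius m hm t ht]
  have hsplit : (∫ y in B, f y ∂μ) + (∫ y in Bᶜ, f y ∂μ) = 1 := by
    rw [integral_add_compl measurableSet_ball hf_int, hstoch]
  have hCS : (∫ y in B, f y ∂μ) ^ 2 ≤ (μ B).toReal * ∫ y in B, f y ^ 2 ∂μ :=
    cauchy_schwarz_set μ hμB_fin hfm hf_nonneg hsq_int.restrict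
  have hsub : (∫ y in B, f y ^ 2 ∂μ) ≤ ∫ y, f y ^ 2 ∂μ :=
    setIntegral_le_integral hsq_int (Filter.Eventually.of_forall fun y => sq_nonneg _)
  have hμBnn : (0 : ℝ) ≤ (μ B).toReal := ENNReal.toReal_nonneg
  have hHnn : 0 ≤ ∫ y, f y ^ 2 ∂μ := integral_nonneg fun y => sq_nonneg _
  have hchain : (∫ y in B, f y ∂μ) ^ 2 ≤
      (E * (4 * π * t) ^ ((m : ℝ) / 2)) * H t x x := by
    calc (∫ y in B, f y ∂μ) ^ 2 ≤ (μ B).toReal * ∫ y in B, f y ^ 2 ∂μ := hCS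
      _ ≤ (μ B).toReal * ∫ y, f y ^ 2 ∂μ := by
          exact mul_le_mul_of_nonneg_left hsub hμBnn
      _ ≤ (E * (4 * π * t) ^ ((m : ℝ) / 2)) * ∫ y, f y ^ 2 ∂μ := by
          exact mul_le_mul_of_nonneg_right hμB_le hHnn
      _ = (E * (4 * π * t) ^ ((m : ℝ) / 2)) * H t x x := by rw [hHt]
  rw [div_le_iff₀ hE]
  have heq : (1 : ℝ) - ∫ y in Bᶜ, f y ∂μ = ∫ y in B, f y ∂μ := by linarith
  rw [show (1 - ∫ y in (Metric.ball x
        (2 * (((m : ℝ) / 2) * Real.Gamma ((m : ℝ) / 2)) ^ (1 / (m : ℝ)) *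
          t ^ ((1 : ℝ) / 2)))ᶜ, H (t / 2) x y ∂μ) = ∫ y in B, f y ∂μ from heq]
  linarith [hchain]
end
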